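/- arXiv:1902.00747 — 8 statements merged into one kernel-verified Lean document; each statement's English description precedes it below -/
import Mathlib

section
/- Let G be the complete multipartite graph K_{n_1,…,n_k} of order n = n_1 + ⋯ + n_k (with n_i ≥ 1 for all i). Then the Seidel characteristic polynomial of G satisfies S_G(λ) = (λ+1)^{n−k} · ( ∏_{i=1}^{k} (λ + 1 − 2n_i) + ∑_{i=1}^{k} n_i ∏_{j≠i} (λ + 1 − 2n_j) ), which is the paper's formula S_G(λ) = (λ+1)^{n−k} (1 + ∑_{i=1}^{k} n_i/(λ+1−2n_i)) ∏_{i=1}^{k} (λ+1−2n_i) cleared of denominators. -/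
open Polynomial Matrix Finset SimpleGraph

/- The Seidel matrix `S(G) = J - I - 2A(G)` of a simple graph `G`. -/
open scoped Classical in
noncomputable def seidelMatrix {V : Type*} [Fintype V] [DecidableEq V]
    (G : SimpleGraph V) : Matrix V V ℝ :=
  (Matrix.of fun _ _ => (1 : ℝ)) - 1 - 2 • G.adjMatrix ℝ

lemma my_eval_charpoly {m : Type*} [Fintype m] [DecidableEq m] (M : Matrix m m ℝ) (t : ℝ) :
    M.charpoly.eval t = (t • (1 : Matrix m m ℝ) - M).det := by
  rw [Matrix.charpoly, ← Polynomial.coe_evalRingHom, RingHom.map_det]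
  congr 1
  ext i j
  by_cases h : i = j
  · subst h; simp [charmatrix_apply_eq, Matrix.one_apply]
  · simp [charmatrix_apply_ne _ _ _ h, Matrix.one_apply, h]

section main
variable (k : ℕ) (n : Fin k → ℕ)

noncomputable def Pmat : Matrix (Σ i : Fin k, Fin (n i)) (Fin k) ℝ :=
  Matrix.of fun v i => if v.1 = i then 1 else 0

noncomputable def Cmat : Matrix (Fin k) (Fin k) ℝ :=
  Matrix.of fun i j => if i = j then (-1 : ℝ) else 1

lemma h_decomp (t : ℝ) :
    t • (1 : Matrix (Σ i : Fin k, Fin (n i)) (Σ i : Fin k, Fin (n i)) ℝ)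
      - seidelMatrix (completeMultipartiteGraph fun i => Fin (n i)) =
    (t + 1) • 1 + Pmat k n * (Cmat k * (Pmat k n)ᵀ) := by
  ext v w
  have hPCP : (Pmat k n * (Cmat k * (Pmat k n)ᵀ)) v w
      = (if v.1 = w.1 then (-1 : ℝ) else 1) := by
    calc (Pmat k n * (Cmat k * (Pmat k n)ᵀ)) v w
        = (Cmat k * (Pmat k n)ᵀ) v.1 w := by
          rw [Matrix.mul_apply]
          simp [Pmat, ite_mul, Finset.sum_ite_eq]
      _ = Cmat k v.1 w.1 := by
          rw [Matrix.mul_apply]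
          simp [Pmat, mul_ite, Finset.sum_ite_eq]
      _ = (if v.1 = w.1 then (-1 : ℝ) else 1) := rfl
  simp only [Matrix.sub_apply, Matrix.add_apply, Matrix.smul_apply, hPCP, seidelMatrix,
    Matrix.sub_apply, Matrix.of_apply, Matrix.smul_apply, SimpleGraph.adjMatrix_apply,
    completeMultipartiteGraph, SimpleGraph.comap_adj, SimpleGraph.top_adj, smul_eq_mul]
  by_cases hvw : v = w
  · subst hvw; simp [Matrix.one_apply]
  · by_cases h1 : v.1 = w.1
    · simp only [Matrix.one_apply_ne hvw, h1, if_pos, if_neg, ite_true, ite_false,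
        smul_zero, mul_zero, mul_one]
      norm_num [h1]
    · simp only [Matrix.one_apply_ne hvw, h1]
      norm_num [h1]

lemma h_PtP : (Pmat k n)ᵀ * Pmat k n = Matrix.diagonal (fun i => (n i : ℝ)) := by
  ext i j
  simp only [Matrix.mul_apply, Matrix.transpose_apply, Pmat, Matrix.of_apply]
  rw [← Finset.univ_sigma_univ, Finset.sum_sigma]
  by_cases hij : i = j
  · subst hij
    simp [Finset.sum_ite_eq', Matrix.diagonal_apply_eq]
  · rw [Matrix.diagonal_apply_ne _ hij]
    apply Finset.sum_eq_zero
    intro a _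
    apply Finset.sum_eq_zero
    intro b _
    by_cases hai : a = i <;> by_cases haj : a = j <;> simp_all

lemma h_det (hn : ∀ i, 1 ≤ n i) (t : ℝ) (h1 : t + 1 ≠ 0)
    (hd : ∀ i, t + 1 - 2 * (n i : ℝ) ≠ 0) :
    (t • (1 : Matrix (Σ i : Fin k, Fin (n i)) (Σ i : Fin k, Fin (n i)) ℝ)
      - seidelMatrix (completeMultipartiteGraph fun i => Fin (n i))).det =
    (t + 1) ^ ((∑ i, n i) - k) *
      ((∏ i, (t + 1 - 2 * (n i : ℝ))) +
        ∑ i, (n i : ℝ) * ∏ j ∈ Finset.univ.erase i, (t + 1 - 2 * (n j : ℝ))) := by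
  classical
  set d : Fin k → ℝ := fun i => t + 1 - 2 * (n i : ℝ) with hd_def
  have hk : k ≤ ∑ i, n i := by
    calc k = ∑ _i : Fin k, 1 := by simp
    _ ≤ ∑ i, n i := Finset.sum_le_sum fun i _ => hn i
  have hcard : Fintype.card (Σ i : Fin k, Fin (n i)) = ∑ i, n i := by simp
  rw [h_decomp]
  have e1 : (t + 1) • (1 : Matrix (Σ i : Fin k, Fin (n i)) (Σ i : Fin k, Fin (n i)) ℝ)
      + Pmat k n * (Cmat k * (Pmat k n)ᵀ)
      = (t + 1) • (1 + ((t + 1)⁻¹ • Pmat k n) * (Cmat k * (Pmat k n)ᵀ)) := by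
    rw [smul_add, Matrix.smul_mul, smul_smul, mul_inv_cancel₀ h1, one_smul]
  rw [e1, Matrix.det_smul, hcard, Matrix.det_one_add_mul_comm]
  have e2 : (Cmat k * (Pmat k n)ᵀ) * ((t + 1)⁻¹ • Pmat k n)
      = (t + 1)⁻¹ • (Cmat k * Matrix.diagonal (fun i => (n i : ℝ))) := by
    rw [Matrix.mul_smul, Matrix.mul_assoc, h_PtP]
  rw [e2]
  have e3 : (1 : Matrix (Fin k) (Fin k) ℝ)
      + (t + 1)⁻¹ • (Cmat k * Matrix.diagonal (fun i => (n i : ℝ)))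
      = (t + 1)⁻¹ • ((t + 1) • 1 + Cmat k * Matrix.diagonal (fun i => (n i : ℝ))) := by
    rw [smul_add, smul_smul, inv_mul_cancel₀ h1, one_smul]
  rw [e3, Matrix.det_smul, Fintype.card_fin]
  have e4 : (t + 1) • (1 : Matrix (Fin k) (Fin k) ℝ)
      + Cmat k * Matrix.diagonal (fun i => (n i : ℝ))
      = Matrix.diagonal d
        + Matrix.replicateCol Unit (fun _ : Fin k => (1 : ℝ)) * Matrix.replicateRow Unit (fun j => (n j : ℝ)) := by
    ext i j
    have hCD : (Cmat k * Matrix.diagonal (fun i => (n i : ℝ))) i j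
        = (if i = j then (-1 : ℝ) else 1) * (n j : ℝ) := by
      rw [Matrix.mul_apply]
      simp [Cmat, Matrix.diagonal_apply, mul_ite, Finset.sum_ite_eq']
    have hcr : (Matrix.replicateCol Unit (fun _ : Fin k => (1 : ℝ))
        * Matrix.replicateRow Unit (fun j => (n j : ℝ))) i j = (n j : ℝ) := by
      rw [Matrix.mul_apply]
      simp
    simp only [Matrix.add_apply, Matrix.smul_apply, hCD, hcr, Matrix.one_apply,
      Matrix.diagonal_apply, smul_eq_mul]
    by_cases h : i = j
    · subst h; simp [hd_def]; ring
    · simp [h]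
  rw [e4]
  have hA : IsUnit (Matrix.diagonal d).det := by
    rw [Matrix.det_diagonal]
    exact (Finset.prod_ne_zero_iff.mpr fun i _ => hd i).isUnit
  rw [Matrix.det_add_replicateCol_mul_replicateRow hA, Matrix.det_diagonal]
  have e5 : ((1 : Matrix Unit Unit ℝ)
      + Matrix.replicateRow Unit (fun j => (n j : ℝ)) * (Matrix.diagonal d)⁻¹
        * Matrix.replicateCol Unit (fun _ : Fin k => (1 : ℝ))).det
      = 1 + ∑ i, (n i : ℝ) * (d i)⁻¹ := by
    have hinv : (Matrix.diagonal d)⁻¹ = Matrix.diagonal (fun i => (d i)⁻¹) := by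
      apply Matrix.inv_eq_right_inv
      rw [Matrix.diagonal_mul_diagonal]
      ext i j
      by_cases h : i = j
      · subst h; simp [mul_inv_cancel₀ (show d i ≠ 0 from hd i)]
      · simp [Matrix.diagonal_apply_ne _ h, Matrix.one_apply_ne h]
    rw [Matrix.det_unique, hinv]
    simp [Matrix.mul_apply, Matrix.replicateRow_apply, Matrix.replicateCol_apply, Matrix.one_apply,
      Ring.inverse_eq_inv', Ring.inverse_eq_inv, Matrix.diagonal_apply, ite_mul, mul_ite,
      Finset.sum_ite_eq, Finset.sum_ite_eq']
  rw [e5]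
  have harith1 : (∏ i, d i) * (1 + ∑ i, (n i : ℝ) * (d i)⁻¹)
      = (∏ i, d i) + ∑ i, (n i : ℝ) * ∏ j ∈ Finset.univ.erase i, d j := by
    rw [mul_add, mul_one, Finset.mul_sum]
    congr 1
    refine Finset.sum_congr rfl fun i _ => ?_
    have hdi : d i ≠ 0 := hd i
    rw [← Finset.mul_prod_erase Finset.univ d (Finset.mem_univ i)]
    have : (d i * ∏ j ∈ Finset.univ.erase i, d j) * ((n i : ℝ) * (d i)⁻¹)
        = ((n i : ℝ) * ∏ j ∈ Finset.univ.erase i, d j) * (d i * (d i)⁻¹) := by ring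
    rw [this, mul_inv_cancel₀ hdi, mul_one]
  have harith2 : (t + 1) ^ (∑ i, n i) * ((t + 1)⁻¹) ^ k = (t + 1) ^ ((∑ i, n i) - k) := by
    conv_lhs => rw [← Nat.sub_add_cancel hk, pow_add]
    rw [mul_assoc, ← mul_pow, mul_inv_cancel₀ h1, one_pow, mul_one]
  calc (t + 1) ^ (∑ i, n i) * (((t + 1)⁻¹) ^ k * ((∏ i, d i) * (1 + ∑ i, (n i : ℝ) * (d i)⁻¹)))
      = ((t + 1) ^ (∑ i, n i) * ((t + 1)⁻¹) ^ k)
        * ((∏ i, d i) * (1 + ∑ i, (n i : ℝ) * (d i)⁻¹)) := by ring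
    _ = _ := by rw [harith2, harith1]

end main

/-- **Theorem (Seidel characteristic polynomial of the complete multipartite graph).**
For `G = K_{n_1,…,n_k}` of order `n = n_1 + ⋯ + n_k` with all `n_i ≥ 1`,
`S_G(λ) = (λ+1)^{n-k} (∏_i (λ+1-2n_i) + ∑_i n_i ∏_{j≠i} (λ+1-2n_j))`. -/
theorem seidel_charpoly_completeMultipartite (k : ℕ) (n : Fin k → ℕ)
    (hn : ∀ i, 1 ≤ n i) :
    (seidelMatrix (completeMultipartiteGraph fun i => Fin (n i))).charpoly =
      (X + 1) ^ ((∑ i, n i) - k) *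
        ((∏ i, (X + 1 - 2 * (n i : ℝ[X]))) +
          ∑ i, (n i : ℝ[X]) * ∏ j ∈ Finset.univ.erase i, (X + 1 - 2 * (n j : ℝ[X]))) := by
  apply Polynomial.eq_of_infinite_eval_eq
  have hfin : (({-1} ∪ Set.range fun i => 2 * (n i : ℝ) - 1) : Set ℝ).Finite :=
    (Set.finite_singleton _).union (Set.finite_range _)
  refine hfin.infinite_compl.mono fun t ht => ?_
  simp only [Set.mem_compl_iff, Set.mem_union, Set.mem_singleton_iff, Set.mem_range, not_or,
    not_exists] at ht
  obtain ⟨ht1, ht2⟩ := ht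
  have h1 : t + 1 ≠ 0 := fun h => ht1 (by linarith)
  have hdne : ∀ i, t + 1 - 2 * (n i : ℝ) ≠ 0 := fun i h => ht2 i (by linarith)
  simp only [Set.mem_setOf_eq]
  rw [my_eval_charpoly, h_det k n hn t h1 hdne]
  simp [Polynomial.eval_prod, Polynomial.eval_finset_sum]
end

section
/- Let G be the complete multipartite graph K_{r_1·n_1,…,r_s·n_s} of order n = ∑_{i=1}^s r_i n_i, having exactly r_i parts of size n_i for each i = 1,…,s (the n_i pairwise distinct, r_i ≥ 1), and let k = ∑_{i=1}^s r_i. Then S_G(λ) = (λ+1)^{n−k} · ∏_{i=1}^{s} (λ+1−2n_i)^{r_i−1} · ( ∏_{i=1}^{s} (λ+1−2n_i) + ∑_{i=1}^{s} r_i n_i ∏_{j≠i} (λ+1−2n_j) ). -/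
open Polynomial Matrix Finset SimpleGraph

theorem my_det_blockDiagonal' {ι : Type*} [Fintype ι] [DecidableEq ι] {m : ι → Type*}
    [∀ i, Fintype (m i)] [∀ i, DecidableEq (m i)] {R : Type*} [CommRing R]
    (M : ∀ i, Matrix (m i) (m i) R) :
    (Matrix.blockDiagonal' M).det = ∏ i, (M i).det := by
  classical
  let e := Fintype.equivFin ι
  set b : (Σ i, m i) → Fin (Fintype.card ι) := fun x => e x.1 with hb
  have hbt : (Matrix.blockDiagonal' M).BlockTriangular b := by
    intro x y hxy
    exact Matrix.blockDiagonal'_apply_ne M _ _ fun h => absurd (congrArg e h) (by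
      simp only [hb] at hxy; exact fun hh => absurd hh.symm (ne_of_lt hxy))
  rw [hbt.det_fintype]
  rw [← Equiv.prod_comp e.symm fun i => (M i).det]
  refine Finset.prod_congr rfl fun k _ => ?_
  let g : m (e.symm k) ≃ { a : Σ i, m i // b a = k } :=
    { toFun := fun a => ⟨⟨e.symm k, a⟩, by simp [hb]⟩
      invFun := fun x => (show x.1.1 = e.symm k from by
        have := x.2; simp only [hb] at this; exact e.eq_symm_apply.mpr this) ▸ x.1.2
      left_inv := fun a => rfl
      right_inv := by
        rintro ⟨⟨j, a⟩, hj⟩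
        have : j = e.symm k := by simp only [hb] at hj; exact e.eq_symm_apply.mpr hj
        subst this
        rfl }
  rw [← Matrix.det_submatrix_equiv_self g ((Matrix.blockDiagonal' M).toSquareBlock b k)]
  congr 1
  ext x y
  simp [Matrix.toSquareBlock, Matrix.toSquareBlockProp, Matrix.toBlock, g,
    Matrix.blockDiagonal'_apply_eq]

theorem my_det_block {K : Type*} [Field K] {m : Type*} [Fintype m] [DecidableEq m] [Nonempty m]
    (c : K) (hc : c ≠ 0) :
    ((c • (1 : Matrix m m K) - 2 • Matrix.of fun _ _ => (1 : K))).det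
      = c ^ (Fintype.card m - 1) * (c - 2 * Fintype.card m) := by
  have h : (c • (1 : Matrix m m K) - 2 • Matrix.of fun _ _ => (1 : K))
      = c • ((1 : Matrix m m K) +
          Matrix.replicateCol Unit (fun _ : m => -(2/c)) * Matrix.replicateRow Unit (fun _ : m => (1:K))) := by
    ext i j
    simp only [Matrix.sub_apply, Matrix.smul_apply, Matrix.one_apply, Matrix.add_apply,
      Matrix.of_apply, smul_eq_mul, Matrix.mul_apply, Matrix.replicateCol_apply, Matrix.replicateRow_apply,
      Finset.univ_unique, Finset.sum_const, Finset.card_singleton, one_smul]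
    by_cases hij : i = j
    · simp only [hij, if_pos rfl, if_true]
      field_simp
      try ring
    · simp only [hij, if_false, if_neg hij]
      field_simp
      ring
  rw [h, Matrix.det_smul, Matrix.det_one_add_replicateCol_mul_replicateRow]
  have hd : ((fun _ : m => (1:K)) ⬝ᵥ fun _ => -(2/c)) = (Fintype.card m : K) * (-(2/c)) := by
    simp only [dotProduct, one_mul, Finset.sum_const, Finset.card_univ, nsmul_eq_mul]
  rw [hd]
  obtain ⟨k, hk⟩ : ∃ k, Fintype.card m = k + 1 :=
    ⟨Fintype.card m - 1, (Nat.succ_pred_eq_of_pos Fintype.card_pos).symm⟩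
  rw [hk]
  simp only [Nat.add_sub_cancel]
  push_cast
  have h1 : (1 + ((k:K) + 1) * -(2/c)) = (c - 2*((k:K)+1))/c := by
    field_simp
    ring
  rw [h1, pow_succ]
  field_simp

theorem poly_ne_zero (m : ℕ) : (X + 1 - 2 * (m : ℝ[X])) ≠ 0 := by
  intro h
  have h2 := congrArg (fun p => Polynomial.coeff p 1) h
  have h3 : (2 * (m : ℝ[X])) = ((2 * m : ℕ) : ℝ[X]) := by push_cast; ring
  simp only [h3, coeff_sub, coeff_add, coeff_X_one, coeff_one, coeff_zero,
    Polynomial.coeff_natCast_ite] at h2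
  norm_num at h2

set_option maxHeartbeats 1600000 in
/-- **Theorem (Seidel characteristic polynomial of `K_{r_1·n_1,…,r_s·n_s}`).**
The complete multipartite graph with exactly `r i` parts of size `n i` (the `n i`
pairwise distinct, `r i ≥ 1`, `n i ≥ 1`), of order `N = ∑ i, r i * n i` with
`k = ∑ i, r i` parts, has Seidel characteristic polynomial
`(λ+1)^{N-k} ∏_i (λ+1-2n_i)^{r_i-1} (∏_i (λ+1-2n_i) + ∑_i r_i n_i ∏_{j≠i} (λ+1-2n_j))`. -/
theorem seidel_charpoly_completeMultipartite_mult (s : ℕ) (r n : Fin s → ℕ)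
    (hr : ∀ i, 1 ≤ r i) (hn : ∀ i, 1 ≤ n i) (hdist : Function.Injective n) :
    (seidelMatrix (completeMultipartiteGraph
        fun p : (i : Fin s) × Fin (r i) => Fin (n p.1))).charpoly =
      (X + 1) ^ ((∑ i, r i * n i) - ∑ i, r i) *
        (∏ i, (X + 1 - 2 * (n i : ℝ[X])) ^ (r i - 1)) *
        ((∏ i, (X + 1 - 2 * (n i : ℝ[X]))) +
          ∑ i, (r i : ℝ[X]) * (n i : ℝ[X]) *
            ∏ j ∈ Finset.univ.erase i, (X + 1 - 2 * (n j : ℝ[X]))) := by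
  classical
  set K := FractionRing ℝ[X]
  set f : ℝ[X] →+* K := algebraMap ℝ[X] K with hfdef
  have hf : Function.Injective f := IsFractionRing.injective ℝ[X] K
  apply hf
  set c : K := f X + 1 with hcdef
  set d : Fin s → K := fun i => c - 2 * (n i : K) with hddef
  have hfd : ∀ i, f (X + 1 - 2 * (n i : ℝ[X])) = d i := by
    intro i
    simp only [hddef, hcdef, map_sub, map_add, _root_.map_one, _root_.map_mul, map_ofNat, map_natCast]
  have hc0 : c ≠ 0 := by
    have h1 : c = f (X + 1) := by simp [hcdef]
    have hne : (X + 1 : ℝ[X]) ≠ 0 := by simpa using poly_ne_zero 0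
    rw [h1]
    exact fun h0 => hne (hf (by rw [h0, map_zero]))
  have hd0 : ∀ i, d i ≠ 0 := by
    intro i
    rw [← hfd i]
    exact fun h0 => poly_ne_zero (n i) (hf (by rw [h0, map_zero]))
  set P := (i : Fin s) × Fin (r i) with hPdef
  set G := completeMultipartiteGraph fun p : P => Fin (n p.1) with hGdef
  haveI hne : ∀ p : P, Nonempty (Fin (n p.1)) := fun p => ⟨⟨0, hn p.1⟩⟩
  set Db : ∀ p : P, Matrix (Fin (n p.1)) (Fin (n p.1)) K :=
    fun p => c • 1 - 2 • Matrix.of fun _ _ => 1 with hDbdef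
  set D : Matrix ((p : P) × Fin (n p.1)) ((p : P) × Fin (n p.1)) K :=
    Matrix.blockDiagonal' Db with hDdef
  set w : ((p : P) × Fin (n p.1)) → K := fun v => (d v.1.1)⁻¹ with hwdef
  -- D *ᵥ w = 1
  have hDw : D *ᵥ w = fun _ => 1 := by
    funext v
    obtain ⟨p₀, a₀⟩ := v
    simp only [Matrix.mulVec, dotProduct]
    rw [← Finset.univ_sigma_univ, Finset.sum_sigma]
    rw [Finset.sum_eq_single p₀]
    · simp only [hDdef, Matrix.blockDiagonal'_apply_eq, hDbdef, hwdef,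
        Matrix.sub_apply, Matrix.smul_apply, Matrix.one_apply, Matrix.of_apply,
        smul_eq_mul]
      have hsummand : ∀ x : Fin (n p₀.1), ((c * if a₀ = x then 1 else 0) - 2 • (1:K)) * (d p₀.1)⁻¹
          = (if a₀ = x then c * (d p₀.1)⁻¹ else 0) - 2 * (d p₀.1)⁻¹ := by
        intro x
        by_cases h : a₀ = x <;> simp [h] <;> ring
      rw [Finset.sum_congr rfl fun x _ => hsummand x, Finset.sum_sub_distrib,
        Finset.sum_ite_eq Finset.univ a₀ fun _ => c * (d p₀.1)⁻¹]
      simp only [Finset.mem_univ, if_true, Finset.sum_const, Finset.card_univ,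
        Fintype.card_fin, nsmul_eq_mul]
      have h5 : c * (d p₀.1)⁻¹ - (n p₀.1 : K) * (2 * (d p₀.1)⁻¹)
          = (c - 2 * (n p₀.1 : K)) * (d p₀.1)⁻¹ := by ring
      rw [h5, show c - 2 * (n p₀.1 : K) = d p₀.1 from rfl, mul_inv_cancel₀ (hd0 p₀.1)]
    · intro q _ hq
      apply Finset.sum_eq_zero
      intro a _
      rw [hDdef]
      rw [Matrix.blockDiagonal'_apply_ne Db _ _ (Ne.symm hq)]
      exact zero_mul _
    · exact fun h => absurd (Finset.mem_univ p₀) h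
  -- the key factorization
  have key : ((seidelMatrix G).charmatrix).map f
      = D * (1 + Matrix.replicateCol Unit w * Matrix.replicateRow Unit (fun _ => (1:K))) := by
    have h2 : D * (1 + Matrix.replicateCol Unit w * Matrix.replicateRow Unit (fun _ => (1:K)))
        = D + Matrix.replicateCol Unit (fun _ => (1:K)) * Matrix.replicateRow Unit (fun _ => (1:K)) := by
      rw [Matrix.mul_add, Matrix.mul_one, ← Matrix.mul_assoc, ← Matrix.replicateCol_mulVec, hDw]
    rw [h2]
    ext ⟨p, a⟩ ⟨q, b⟩
    have hseidel : ∀ v u : (p : P) × Fin (n p.1), seidelMatrix G v u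
        = 1 - (if v = u then 1 else 0) - 2 * (if v.1 ≠ u.1 then 1 else 0) := by
      intro v u
      simp only [seidelMatrix, hGdef, Matrix.sub_apply, Matrix.of_apply, Matrix.one_apply,
        Matrix.smul_apply, SimpleGraph.adjMatrix_apply, SimpleGraph.comap_adj,
        SimpleGraph.top_adj, smul_eq_mul]
      rw [nsmul_eq_mul, Nat.cast_ofNat]
    by_cases hpq : p = q
    · subst hpq
      by_cases hab : a = b
      · subst hab
        rw [Matrix.map_apply, Matrix.charmatrix_apply_eq, hseidel]
        rw [if_pos rfl, if_neg (show ¬((⟨p,a⟩ : (p : P) × Fin (n p.1)).1 ≠ (⟨p,a⟩ : (p : P) × Fin (n p.1)).1) from fun h => h rfl)]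
        rw [Matrix.add_apply, hDdef, Matrix.blockDiagonal'_apply_eq, hDbdef]
        simp only [map_sub, _root_.map_one, Polynomial.C_1, _root_.map_mul]
        simp only [Matrix.sub_apply, Matrix.smul_apply, Matrix.one_apply_eq, Matrix.of_apply,
          smul_eq_mul, mul_one, Matrix.mul_apply, Matrix.replicateCol_apply, Matrix.replicateRow_apply,
          Finset.univ_unique, Finset.sum_const, Finset.card_singleton, one_smul]
        simp only [Polynomial.C_0, map_zero, mul_zero, sub_zero, sub_self, nsmul_eq_mul,
          one_smul, Nat.cast_ofNat, mul_one, hcdef]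
        ring
      · have hne' : (⟨p, a⟩ : (p : P) × Fin (n p.1)) ≠ ⟨p, b⟩ := by
          simp [hab]
        rw [Matrix.map_apply, Matrix.charmatrix_apply_ne _ _ _ hne', hseidel]
        rw [if_neg hne', if_neg (show ¬((⟨p,a⟩ : (p : P) × Fin (n p.1)).1 ≠ (⟨p,b⟩ : (p : P) × Fin (n p.1)).1) from fun h => h rfl)]
        rw [Matrix.add_apply, hDdef, Matrix.blockDiagonal'_apply_eq, hDbdef]
        simp only [Matrix.sub_apply, Matrix.smul_apply, Matrix.one_apply_ne hab,
          Matrix.of_apply, smul_eq_mul, mul_one, Matrix.mul_apply, Matrix.replicateCol_apply,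
          Matrix.replicateRow_apply, Finset.univ_unique, Finset.sum_const, Finset.card_singleton,
          one_smul]
        norm_num [hcdef]
    · have hne' : (⟨p, a⟩ : (p : P) × Fin (n p.1)) ≠ ⟨q, b⟩ := by
        intro h; exact hpq (congrArg Sigma.fst h)
      rw [Matrix.map_apply, Matrix.charmatrix_apply_ne _ _ _ hne', hseidel]
      rw [if_neg hne', if_pos (show (⟨p,a⟩ : (p : P) × Fin (n p.1)).1 ≠ (⟨q,b⟩ : (p : P) × Fin (n p.1)).1 from hpq)]
      rw [Matrix.add_apply, hDdef, Matrix.blockDiagonal'_apply_ne Db _ _ hpq]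
      simp only [Matrix.mul_apply, Matrix.replicateCol_apply, Matrix.replicateRow_apply, Finset.univ_unique,
        Finset.sum_const, Finset.card_singleton, one_smul]
      norm_num
  -- compute determinants
  have hlhs : f ((seidelMatrix G).charpoly)
      = D.det * (1 + (fun _ => (1:K)) ⬝ᵥ w) := by
    have : f ((seidelMatrix G).charpoly) = (((seidelMatrix G).charmatrix).map f).det := by
      rw [show ((seidelMatrix G).charpoly) = ((seidelMatrix G).charmatrix).det from rfl,
        RingHom.map_det, RingHom.mapMatrix_apply]
    rw [this, key, Matrix.det_mul, Matrix.det_one_add_replicateCol_mul_replicateRow]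
  have hdetD : D.det = ∏ i, (c ^ (n i - 1) * d i) ^ (r i) := by
    rw [hDdef, my_det_blockDiagonal']
    have hblk : ∀ p : P, (Db p).det = c ^ (n p.1 - 1) * (c - 2 * (n p.1 : K)) := by
      intro p
      haveI := hne p
      rw [hDbdef]
      rw [my_det_block c hc0]
      simp [Fintype.card_fin]
    rw [Finset.prod_congr rfl fun p _ => hblk p]
    rw [← Finset.univ_sigma_univ, Finset.prod_sigma]
    refine Finset.prod_congr rfl fun i _ => ?_
    show ∏ _t : Fin (r i), c ^ (n i - 1) * (c - 2 * (n i : K)) = (c ^ (n i - 1) * d i) ^ r i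
    rw [Finset.prod_const, Finset.card_univ, Fintype.card_fin]
  have hdot : ((fun _ => (1:K)) ⬝ᵥ w) = ∑ i, (r i : K) * ((n i : K) * (d i)⁻¹) := by
    simp only [dotProduct, one_mul, hwdef]
    rw [← Finset.univ_sigma_univ, Finset.sum_sigma]
    rw [← Finset.univ_sigma_univ, Finset.sum_sigma]
    refine Finset.sum_congr rfl fun i _ => ?_
    show ∑ _t : Fin (r i), ∑ _a : Fin (n i), (d i)⁻¹ = _
    simp only [Finset.sum_const, Finset.card_univ, Fintype.card_fin, nsmul_eq_mul]
  have halg : (∏ i, (c ^ (n i - 1) * d i) ^ (r i)) * (1 + ∑ i, (r i : K) * ((n i : K) * (d i)⁻¹))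
      = c ^ ((∑ i, r i * n i) - ∑ i, r i) * (∏ i, (d i) ^ (r i - 1)) *
        ((∏ i, d i) + ∑ i, (r i : K) * (n i : K) * ∏ j ∈ Finset.univ.erase i, d j) := by
    have e1 : ∏ i, (c ^ (n i - 1) * d i) ^ (r i)
        = c ^ ((∑ i, r i * n i) - ∑ i, r i) * ∏ i, (d i) ^ (r i) := by
      simp only [mul_pow, ← pow_mul]
      rw [Finset.prod_mul_distrib, Finset.prod_pow_eq_pow_sum]
      congr 2
      have h7 : ∀ i ∈ Finset.univ, (n i - 1) * r i = r i * n i - r i := fun i _ => by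
        rw [Nat.sub_mul, one_mul, mul_comm]
      rw [Finset.sum_congr rfl h7, Finset.sum_tsub_distrib]
      exact fun i _ => Nat.le_mul_of_pos_right _ (hn i)
    have e2 : ∏ i, (d i) ^ (r i) = (∏ i, (d i) ^ (r i - 1)) * ∏ i, d i := by
      rw [← Finset.prod_mul_distrib]
      exact Finset.prod_congr rfl fun i _ => by
        rw [← pow_succ, Nat.sub_add_cancel (hr i)]
    have e3 : (∏ i, d i) * (1 + ∑ i, (r i : K) * ((n i : K) * (d i)⁻¹))
        = (∏ i, d i) + ∑ i, (r i : K) * (n i : K) * ∏ j ∈ Finset.univ.erase i, d j := by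
      rw [mul_add, mul_one, Finset.mul_sum]
      congr 1
      refine Finset.sum_congr rfl fun i _ => ?_
      rw [← Finset.prod_erase_mul Finset.univ d (Finset.mem_univ i)]
      have h6 : ((∏ j ∈ Finset.univ.erase i, d j) * d i) * ((r i:K) * ((n i:K) * (d i)⁻¹))
          = (r i:K) * (n i:K) * (∏ j ∈ Finset.univ.erase i, d j) * (d i * (d i)⁻¹) := by ring
      rw [h6, mul_inv_cancel₀ (hd0 i), mul_one]
    rw [e1, e2, mul_assoc (c ^ ((∑ i, r i * n i) - ∑ i, r i)), mul_assoc (∏ i, (d i) ^ (r i - 1)),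
      e3, ← mul_assoc]
  rw [hlhs, hdetD, hdot, halg]
  simp only [_root_.map_mul, _root_.map_add, map_pow, map_prod, map_sum, map_sub,
    _root_.map_one, map_natCast, map_ofNat, hddef, hcdef]
end

section
/- Let λ_n be the least Seidel eigenvalue (least eigenvalue of the Seidel matrix) of the complete multipartite graph K_{n_1,…,n_k} of order n = n_1 + ⋯ + n_k, where k ≥ 2 and n_i ≥ 1 for all i. Then λ_n ≤ n/k − 1 − (2/k) ∑_{1 ≤ i < j ≤ k} √(n_i n_j). -/
open Polynomial Matrix Finset SimpleGraph

lemma sq_sum_aux {k : ℕ} (f : Fin k → ℝ) :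
    (∑ i, f i) * (∑ i, f i) =
      ∑ i, f i * f i +
        2 * ∑ p ∈ Finset.univ.filter (fun p : Fin k × Fin k => p.1 < p.2), f p.1 * f p.2 := by
  classical
  rw [Finset.sum_mul_sum, ← Finset.sum_product']
  rw [← Finset.sum_filter_add_sum_filter_not (Finset.univ ×ˢ Finset.univ)
    (fun p : Fin k × Fin k => p.1 = p.2)]
  have h1 : ∑ p ∈ (Finset.univ ×ˢ Finset.univ).filter (fun p : Fin k × Fin k => p.1 = p.2),
      f p.1 * f p.2 = ∑ i, f i * f i := by
    refine Finset.sum_nbij' (fun p => p.1) (fun i => (i, i)) ?_ ?_ ?_ ?_ ?_ <;>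
      simp +contextual [Finset.mem_filter, eq_comm]
  have h2 : ∑ p ∈ (Finset.univ ×ˢ Finset.univ).filter (fun p : Fin k × Fin k => ¬ p.1 = p.2),
      f p.1 * f p.2 = 2 * ∑ p ∈ Finset.univ.filter (fun p : Fin k × Fin k => p.1 < p.2),
        f p.1 * f p.2 := by
    rw [← Finset.sum_filter_add_sum_filter_not
      ((Finset.univ ×ˢ Finset.univ).filter (fun p : Fin k × Fin k => ¬ p.1 = p.2))
      (fun p : Fin k × Fin k => p.1 < p.2)]
    have e1 : ((Finset.univ ×ˢ Finset.univ).filter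
        (fun p : Fin k × Fin k => ¬ p.1 = p.2)).filter (fun p => p.1 < p.2) =
        Finset.univ.filter (fun p : Fin k × Fin k => p.1 < p.2) := by
      rw [Finset.filter_filter, Finset.univ_product_univ]
      apply Finset.filter_congr
      intro p _
      constructor
      · exact fun h => h.2
      · exact fun h => ⟨ne_of_lt h, h⟩
    have e2 : ((Finset.univ ×ˢ Finset.univ).filter
        (fun p : Fin k × Fin k => ¬ p.1 = p.2)).filter (fun p => ¬ p.1 < p.2) =
        Finset.univ.filter (fun p : Fin k × Fin k => p.2 < p.1) := by
      rw [Finset.filter_filter, Finset.univ_product_univ]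
      apply Finset.filter_congr
      intro p _
      constructor
      · rintro ⟨hne, hnlt⟩; exact lt_of_le_of_ne (not_lt.mp hnlt) (Ne.symm hne)
      · exact fun h => ⟨(ne_of_lt h).symm, not_lt.mpr h.le⟩
    rw [e1, e2]
    have e3 : ∑ p ∈ Finset.univ.filter (fun p : Fin k × Fin k => p.2 < p.1), f p.1 * f p.2 =
        ∑ p ∈ Finset.univ.filter (fun p : Fin k × Fin k => p.1 < p.2), f p.1 * f p.2 := by
      refine Finset.sum_nbij' (fun p => (p.2, p.1)) (fun p => (p.2, p.1)) ?_ ?_ ?_ ?_ ?_ <;>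
        simp +contextual [mul_comm]
    rw [e3]; ring
  rw [h1, h2]

set_option maxHeartbeats 1000000 in
/-- **Theorem (upper bound for the least Seidel eigenvalue).**
If `lam` is the least Seidel eigenvalue of the complete multipartite graph
`K_{n_1,…,n_k}` of order `n = ∑ i, n i` (with `k ≥ 2`, all `n i ≥ 1`), then
`lam ≤ n/k - 1 - (2/k) ∑_{i<j} √(n_i n_j)`. -/
theorem least_seidel_eigenvalue_bound (k : ℕ) (hk : 2 ≤ k) (n : Fin k → ℕ)
    (hn : ∀ i, 1 ≤ n i) (lam : ℝ)
    (hev : ∃ v : ((i : Fin k) × Fin (n i)) → ℝ, v ≠ 0 ∧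
      (seidelMatrix (completeMultipartiteGraph fun i => Fin (n i))).mulVec v = lam • v)
    (hleast : ∀ μ : ℝ, (∃ v : ((i : Fin k) × Fin (n i)) → ℝ, v ≠ 0 ∧
      (seidelMatrix (completeMultipartiteGraph fun i => Fin (n i))).mulVec v = μ • v) →
      lam ≤ μ) :
    lam ≤ (∑ i, (n i : ℝ)) / k - 1 -
      (2 / k) * ∑ p ∈ Finset.univ.filter (fun p : Fin k × Fin k => p.1 < p.2),
        Real.sqrt ((n p.1) * (n p.2)) := by
  classical
  set V := (i : Fin k) × Fin (n i) with hVdef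
  set S : Matrix V V ℝ := seidelMatrix (completeMultipartiteGraph fun i => Fin (n i)) with hSdef
  haveI hne : Nonempty V := ⟨⟨⟨0, by omega⟩, ⟨0, by
    have := hn ⟨0, by omega⟩; omega⟩⟩⟩
  have hHerm : S.IsHermitian := by
    have : Sᵀ = S := by
      rw [hSdef]
      unfold seidelMatrix
      rw [Matrix.transpose_sub, Matrix.transpose_sub, Matrix.transpose_smul,
        SimpleGraph.transpose_adjMatrix, Matrix.transpose_one]
      congr 1
    rw [Matrix.IsHermitian, ← this]
    ext i j
    simp only [Matrix.conjTranspose_apply, starRingEnd_apply, star_trivial]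
    exact congrFun (congrFun this j) i
  have hSym : (Matrix.toEuclideanLin S).IsSymmetric :=
    Matrix.isHermitian_iff_isSymmetric.mp hHerm
  haveI : Nontrivial (EuclideanSpace ℝ V) := by infer_instance
  set T := Matrix.toEuclideanLin S with hTdef
  set μ : ℝ := ⨅ x : {x : EuclideanSpace ℝ V // x ≠ 0},
      RCLike.re (inner ℝ (T (x : EuclideanSpace ℝ V))
        (x : EuclideanSpace ℝ V) : ℝ) / ‖(x : EuclideanSpace ℝ V)‖ ^ 2 with hμdef
  have hev' : Module.End.HasEigenvalue T μ := by
    exact hSym.hasEigenvalue_iInf_of_finiteDimensional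
  obtain ⟨v, hv⟩ := hev'.exists_hasEigenvector
  have hlamμ : lam ≤ μ := by
    refine hleast μ ⟨(WithLp.equiv 2 (V → ℝ)) v, ?_, ?_⟩
    · simpa using hv.right
    · have h1 := hv.apply_eq_smul
      have h2 : S.mulVec ((WithLp.equiv 2 (V → ℝ)) v)
          = (WithLp.equiv 2 (V → ℝ)) (T v) := by
        rw [hTdef]; rfl
      rw [h2, h1]
      rfl
  -- the test vector
  set s : Fin k → ℝ := fun i => Real.sqrt (n i) with hs
  set c : Fin k → ℝ := fun i => (s i)⁻¹ with hc
  have hs0 : ∀ i, 0 < s i := fun i => Real.sqrt_pos.mpr (by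
    have := hn i; positivity)
  have hss : ∀ i, s i * s i = (n i : ℝ) := fun i =>
    Real.mul_self_sqrt (by positivity)
  have hnc : ∀ i, (n i : ℝ) * c i = s i := by
    intro i
    rw [← hss i, hc]
    field_simp
  have hcc : ∀ i, (n i : ℝ) * (c i * c i) = 1 := by
    intro i
    rw [← hss i, hc]
    field_simp
    exact div_self (ne_of_gt (hs0 i))
  set f : V → ℝ := fun p => c p.1 with hf
  set x₀ : EuclideanSpace ℝ V := (WithLp.equiv 2 (V → ℝ)).symm f with hx₀def
  have hx₀ne : x₀ ≠ 0 := by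
    intro h
    have : f ⟨⟨0, by omega⟩, ⟨0, by have := hn ⟨0, by omega⟩; omega⟩⟩ = 0 := by
      rw [hx₀def] at h
      have := congrFun (congrArg (WithLp.equiv 2 (V → ℝ))
        h) ⟨⟨0, by omega⟩, ⟨0, by have := hn ⟨0, by omega⟩; omega⟩⟩
      simpa using this
    rw [hf] at this
    exact (ne_of_gt (inv_pos.mpr (hs0 _))) this
  -- sums over the sigma type
  have sumV : ∀ g : Fin k → ℝ, ∑ p : V, g p.1 = ∑ i, (n i : ℝ) * g i := by
    intro g
    rw [← Finset.univ_sigma_univ, Finset.sum_sigma]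
    refine Finset.sum_congr rfl fun i _ => ?_
    simp [Finset.sum_const, Finset.card_univ, mul_comm]
  set Tsum : ℝ := ∑ i, s i with hTsum
  -- value of S.mulVec f
  have hmv : ∀ p : V, S.mulVec f p = 2 * s p.1 - Tsum - c p.1 := by
    intro p
    have expand : S.mulVec f p
        = ∑ q : V, (f q - (if p = q then f q else 0) - 2 * (if p.1 ≠ q.1 then f q else 0)) := by
      rw [Matrix.mulVec, dotProduct]
      refine Finset.sum_congr rfl fun q _ => ?_
      rw [hSdef]
      unfold seidelMatrix
      simp only [Matrix.sub_apply, Matrix.smul_apply, Matrix.of_apply, Matrix.one_apply,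
        SimpleGraph.adjMatrix_apply, completeMultipartiteGraph, SimpleGraph.comap_adj,
        SimpleGraph.top_adj, smul_eq_mul]
      by_cases h1 : p = q <;> by_cases h2 : p.1 ≠ q.1 <;> simp [h1, h2] <;> ring
    rw [expand]
    rw [Finset.sum_sub_distrib, Finset.sum_sub_distrib]
    have e1 : ∑ q : V, f q = Tsum := by
      rw [hf, sumV c, hTsum]
      exact Finset.sum_congr rfl fun i _ => hnc i
    have e2 : ∑ q : V, (if p = q then f q else 0) = f p := by
      rw [Finset.sum_ite_eq]
      simp
    have e3 : ∑ q : V, (2 * (if p.1 ≠ q.1 then f q else 0)) = 2 * (Tsum - s p.1) := by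
      rw [← Finset.mul_sum]
      congr 1
      have : ∀ q : V, (if p.1 ≠ q.1 then f q else 0) = f q - (if p.1 = q.1 then c q.1 else 0) := by
        intro q
        by_cases h : p.1 = q.1 <;> simp [h, hf]
      rw [Finset.sum_congr rfl fun q _ => this q, Finset.sum_sub_distrib, e1]
      congr 1
      have := sumV (fun j => if p.1 = j then c j else 0)
      rw [this]
      have : ∀ j, (n j : ℝ) * (if p.1 = j then c j else 0) = if p.1 = j then s j else 0 := by
        intro j
        by_cases h : p.1 = j <;> simp [h, hnc]
      rw [Finset.sum_congr rfl fun j _ => this j, Finset.sum_ite_eq]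
      simp
    rw [e1, e2, e3, hf]
    ring
  -- the Rayleigh quotient at x₀
  have hTx : T x₀ = (WithLp.equiv 2 (V → ℝ)).symm (S.mulVec f) := by
    rw [hTdef, hx₀def]
    exact Matrix.toEuclideanLin_apply_piLp_toLp S f
  have hinner : (inner ℝ (T x₀) x₀ : ℝ) = ∑ p : V, S.mulVec f p * f p := by
    rw [hTx, hx₀def]
    rw [PiLp.inner_apply]
    refine Finset.sum_congr rfl fun p _ => ?_
    simp [RCLike.inner_apply]; ring
  have hnorm : ‖x₀‖ ^ 2 = (k : ℝ) := by
    rw [← real_inner_self_eq_norm_sq, hx₀def, PiLp.inner_apply]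
    have : ∀ p : V, (inner ℝ ((WithLp.equiv 2 (V → ℝ)).symm f p)
        ((WithLp.equiv 2 (V → ℝ)).symm f p) : ℝ) = c p.1 * c p.1 := by
      intro p
      simp [RCLike.inner_apply, hf, sq]
    rw [Finset.sum_congr rfl fun p _ => this p, sumV (fun i => c i * c i)]
    rw [Finset.sum_congr rfl fun i _ => hcc i]
    simp
  have hinner' : (inner ℝ (T x₀) x₀ : ℝ)
      = ∑ i, (n i : ℝ) - (k : ℝ)
        - 2 * ∑ p ∈ Finset.univ.filter (fun p : Fin k × Fin k => p.1 < p.2),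
            Real.sqrt ((n p.1) * (n p.2)) := by
    rw [hinner, Finset.sum_congr rfl fun p _ => by rw [hmv p]]
    have : ∀ p : V, (2 * s p.1 - Tsum - c p.1) * f p
        = (2 * s p.1 - Tsum) * c p.1 - c p.1 * c p.1 := by
      intro p; rw [hf]; ring
    rw [Finset.sum_congr rfl fun p _ => this p]
    rw [show (fun p : V => (2 * s p.1 - Tsum) * c p.1 - c p.1 * c p.1)
      = (fun p : V => (fun i => (2 * s i - Tsum) * c i - c i * c i) p.1) from rfl]
    rw [sumV (fun i => (2 * s i - Tsum) * c i - c i * c i)]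
    have e4 : ∀ i, (n i : ℝ) * ((2 * s i - Tsum) * c i - c i * c i)
        = 2 * (n i : ℝ) - Tsum * s i - 1 := by
      intro i
      have h1 := hnc i
      have h2 := hcc i
      have h3 := hss i
      calc (n i : ℝ) * ((2 * s i - Tsum) * c i - c i * c i)
          = (2 * s i - Tsum) * ((n i : ℝ) * c i) - (n i : ℝ) * (c i * c i) := by ring
        _ = (2 * s i - Tsum) * s i - 1 := by rw [h1, h2]
        _ = 2 * (s i * s i) - Tsum * s i - 1 := by ring
        _ = 2 * (n i : ℝ) - Tsum * s i - 1 := by rw [h3]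
    rw [Finset.sum_congr rfl fun i _ => e4 i]
    rw [Finset.sum_sub_distrib, Finset.sum_sub_distrib, ← Finset.mul_sum, ← Finset.mul_sum]
    have e5 : Tsum * Tsum = ∑ i, (n i : ℝ)
        + 2 * ∑ p ∈ Finset.univ.filter (fun p : Fin k × Fin k => p.1 < p.2),
            Real.sqrt ((n p.1) * (n p.2)) := by
      rw [hTsum, sq_sum_aux s]
      congr 1
      · exact Finset.sum_congr rfl fun i _ => hss i
      · congr 1
        refine Finset.sum_congr rfl fun p _ => ?_
        rw [hs]
        rw [← Real.sqrt_mul (by positivity)]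
    have e6 : ∑ _i : Fin k, (1 : ℝ) = (k : ℝ) := by simp
    rw [e6]
    nlinarith [e5]
  -- bounding μ by the Rayleigh quotient at x₀
  have hμle : μ ≤ RCLike.re (inner ℝ (T x₀) x₀ : ℝ) / ‖x₀‖ ^ 2 := by
    rw [hμdef]
    have hbdd : BddBelow (Set.range fun x : {x : EuclideanSpace ℝ V // x ≠ 0} =>
        RCLike.re (inner ℝ (T (x : EuclideanSpace ℝ V)) (x : EuclideanSpace ℝ V) : ℝ)
          / ‖(x : EuclideanSpace ℝ V)‖ ^ 2) := by
      set Tc := LinearMap.toContinuousLinearMap T with hTc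
      refine ⟨-‖Tc‖, ?_⟩
      rintro y ⟨x, rfl⟩
      have hx0 : (0:ℝ) < ‖(x : EuclideanSpace ℝ V)‖ := norm_pos_iff.mpr x.prop
      have hx2 : (0:ℝ) < ‖(x : EuclideanSpace ℝ V)‖ ^ 2 := by positivity
      rw [le_div_iff₀ hx2]
      have h1 : |(inner ℝ (T (x : EuclideanSpace ℝ V)) (x : EuclideanSpace ℝ V) : ℝ)|
          ≤ ‖T (x : EuclideanSpace ℝ V)‖ * ‖(x : EuclideanSpace ℝ V)‖ :=
        abs_real_inner_le_norm _ _
      have h2 : ‖T (x : EuclideanSpace ℝ V)‖ ≤ ‖Tc‖ * ‖(x : EuclideanSpace ℝ V)‖ := by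
        have := Tc.le_opNorm (x : EuclideanSpace ℝ V)
        simpa [hTc] using this
      have h3 : -(‖Tc‖ * ‖(x : EuclideanSpace ℝ V)‖ ^ 2)
          ≤ (inner ℝ (T (x : EuclideanSpace ℝ V)) (x : EuclideanSpace ℝ V) : ℝ) := by
        have := neg_abs_le (inner ℝ (T (x : EuclideanSpace ℝ V)) (x : EuclideanSpace ℝ V) : ℝ)
        nlinarith [norm_nonneg (T (x : EuclideanSpace ℝ V)), norm_nonneg (x : EuclideanSpace ℝ V)]
      simpa using h3
    exact ciInf_le hbdd ⟨x₀, hx₀ne⟩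
  have hk0 : (0:ℝ) < (k : ℝ) := by positivity
  calc lam ≤ μ := hlamμ
    _ ≤ RCLike.re (inner ℝ (T x₀) x₀ : ℝ) / ‖x₀‖ ^ 2 := hμle
    _ = (∑ i, (n i : ℝ)) / k - 1 -
      (2 / k) * ∑ p ∈ Finset.univ.filter (fun p : Fin k × Fin k => p.1 < p.2),
        Real.sqrt ((n p.1) * (n p.2)) := by
      rw [hnorm]
      have : RCLike.re (inner ℝ (T x₀) x₀ : ℝ) = (inner ℝ (T x₀) x₀ : ℝ) := rfl
      rw [this, hinner']
      field_simp
end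

section
/- The characteristic polynomial of the adjacency matrix of the complete multipartite graph K_{n_1,…,n_k} of order n = n_1 + ⋯ + n_k equals λ^{n−k} ( λ^k − ∑_{m=2}^{k} (m−1) σ_m λ^{k−m} ), where σ_m = ∑_{1 ≤ j_1 < ⋯ < j_m ≤ k} n_{j_1} ⋯ n_{j_m} is the m-th elementary symmetric polynomial in n_1,…,n_k. -/
open Polynomial Matrix Finset SimpleGraph

/-- The `m`-th elementary symmetric polynomial `σ_m` in the part sizes
`n 0, …, n (k-1)`, as a real number. -/
noncomputable def esym {k : ℕ} (n : Fin k → ℕ) (m : ℕ) : ℝ :=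
  ∑ t ∈ Finset.powersetCard m (Finset.univ : Finset (Fin k)), ∏ j ∈ t, (n j : ℝ)

private lemma X_mul_deriv (a : ℝ) (p : ℕ) :
    X * derivative (C a * X ^ p) = (p : ℝ[X]) * (C a * X ^ p) := by
  cases p with
  | zero => simp
  | succ q =>
    rw [derivative_C_mul, derivative_X_pow]
    push_cast
    rw [pow_succ]
    simp only [map_add, _root_.map_one, map_natCast, Polynomial.C_1]
    ring

private lemma prod_expand (k : ℕ) (c : Fin k → ℝ) :
    (∏ j, (X + C (c j))) =
      ∑ m ∈ Finset.range (k + 1),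
        C (∑ t ∈ powersetCard m (univ : Finset (Fin k)), ∏ j ∈ t, c j) * X ^ (k - m) := by
  have h := Multiset.prod_X_add_C_eq_sum_esymm ((univ : Finset (Fin k)).val.map c)
  have hcard : Multiset.card ((univ : Finset (Fin k)).val.map c) = k := by simp
  rw [hcard] at h
  have hmap : Multiset.map (fun j => X + C (c j)) (univ : Finset (Fin k)).val
      = Multiset.map (fun r => X + C r) (Multiset.map c (univ : Finset (Fin k)).val) := by
    rw [Multiset.map_map]; rfl
  rw [Finset.prod_eq_multiset_prod, hmap, h]
  refine Finset.sum_congr rfl fun m _ => ?_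
  rw [Finset.esymm_map_val]

private lemma vieta_combination (k : ℕ) (c : Fin k → ℝ) :
    (∏ j, (X + C (c j))) - (∑ j, C (c j) * ∏ i ∈ univ.erase j, (X + C (c i))) =
      X ^ k - ∑ m ∈ Finset.Icc 2 k, ((m : ℝ[X]) - 1) *
        C (∑ t ∈ powersetCard m (univ : Finset (Fin k)), ∏ j ∈ t, c j) * X ^ (k - m) := by
  set σ : ℕ → ℝ := fun m => ∑ t ∈ powersetCard m (univ : Finset (Fin k)), ∏ j ∈ t, c j with hσ
  set P := ∏ j, (X + C (c j)) with hPdef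
  have hexp : P = ∑ m ∈ Finset.range (k + 1), C (σ m) * X ^ (k - m) := prod_expand k c
  have hP' : derivative P = ∑ j, ∏ i ∈ univ.erase j, (X + C (c i)) := by
    rw [hPdef, Finset.prod_eq_multiset_prod, derivative_prod]
    simp only [derivative_add, derivative_X, derivative_C, add_zero, mul_one]
    rw [Finset.sum_eq_multiset_sum]
    congr 1
  have hsum : (∑ j, C (c j) * ∏ i ∈ univ.erase j, (X + C (c i)))
      = (k : ℝ[X]) * P - X * derivative P := by
    have hj : ∀ j ∈ (univ : Finset (Fin k)), C (c j) * ∏ i ∈ univ.erase j, (X + C (c i))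
        = P - X * ∏ i ∈ univ.erase j, (X + C (c i)) := fun j _ => by
      rw [hPdef, ← Finset.mul_prod_erase univ _ (mem_univ j)]; ring
    rw [Finset.sum_congr rfl hj, Finset.sum_sub_distrib, Finset.sum_const,
      Finset.card_univ, Fintype.card_fin, hP', Finset.mul_sum, nsmul_eq_mul]
  rw [hsum]
  have hXd : X * derivative P
      = ∑ m ∈ Finset.range (k + 1), ((k - m : ℕ) : ℝ[X]) * (C (σ m) * X ^ (k - m)) := by
    rw [hexp, derivative_sum, Finset.mul_sum]
    exact Finset.sum_congr rfl fun m _ => X_mul_deriv _ _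
  have key : P - ((k : ℝ[X]) * P - X * derivative P)
      = ∑ m ∈ Finset.range (k + 1), (1 - (m : ℝ[X])) * (C (σ m) * X ^ (k - m)) := by
    rw [hXd]
    nth_rewrite 1 [hexp]
    nth_rewrite 1 [hexp]
    rw [Finset.mul_sum, ← Finset.sum_sub_distrib, ← Finset.sum_sub_distrib]
    refine Finset.sum_congr rfl fun m hm => ?_
    have hmk : m ≤ k := Nat.lt_succ_iff.mp (Finset.mem_range.mp hm)
    rw [Nat.cast_sub hmk]
    ring
  rw [key]
  have hσ0 : σ 0 = 1 := by simp [hσ]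
  rcases Nat.eq_zero_or_pos k with hk | hk
  · subst hk
    simp [hσ0]
  · have hdecomp : Finset.range (k + 1) = insert 0 (insert 1 (Finset.Icc 2 k)) := by
      ext m
      simp only [Finset.mem_range, Finset.mem_insert, Finset.mem_Icc]
      omega
    rw [hdecomp, Finset.sum_insert (by simp), Finset.sum_insert (by simp)]
    rw [hσ0]
    simp only [Nat.cast_zero, Nat.cast_one, Polynomial.C_1, sub_zero, sub_self, one_mul, zero_mul,
      Nat.sub_zero, add_zero, zero_add, pow_zero, mul_one]
    have hneg : ∑ x ∈ Finset.Icc 2 k, (1 - (x : ℝ[X])) * (C (σ x) * X ^ (k - x))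
        = -∑ m ∈ Finset.Icc 2 k, ((m : ℝ[X]) - 1) *
            C (∑ t ∈ powersetCard m (univ : Finset (Fin k)), ∏ j ∈ t, c j) * X ^ (k - m) := by
      rw [← Finset.sum_neg_distrib]
      exact Finset.sum_congr rfl fun m _ => by simp only [hσ]; ring
    rw [hneg]
    ring

private lemma det_diag_sub_rankone {k : ℕ} {F : Type*} [Field F] (x : F) (d : Fin k → F)
    (hx : ∀ j, x + d j ≠ 0) :
    (x • (1 : Matrix (Fin k) (Fin k) F)
        - (Matrix.of fun i j => if i = j then (0:F) else 1) * Matrix.diagonal d).det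
      = (∏ j, (x + d j)) - ∑ j, d j * ∏ i ∈ univ.erase j, (x + d i) := by
  have hN : x • (1 : Matrix (Fin k) (Fin k) F)
        - (Matrix.of fun i j => if i = j then (0:F) else 1) * Matrix.diagonal d
      = Matrix.diagonal (fun j => x + d j)
          + Matrix.replicateCol Unit (fun _ => (-1 : F)) * Matrix.replicateRow Unit d := by
    ext i j
    by_cases h : i = j <;>
      simp [Matrix.mul_diagonal, Matrix.mul_apply, Matrix.one_apply, Matrix.diagonal_apply, h]
  rw [hN]
  have hE : IsUnit (Matrix.diagonal (fun j => x + d j)).det := by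
    rw [Matrix.det_diagonal]
    exact isUnit_iff_ne_zero.mpr (Finset.prod_ne_zero_iff.mpr fun j _ => hx j)
  have hinv : (Matrix.diagonal (fun j => x + d j))⁻¹
      = Matrix.diagonal (fun j => (x + d j)⁻¹) := by
    apply Matrix.inv_eq_right_inv
    rw [Matrix.diagonal_mul_diagonal]
    rw [show (fun i => (x + d i) * (x + d i)⁻¹) = fun _ => (1:F) from
      funext fun i => mul_inv_cancel₀ (hx i)]
    exact Matrix.diagonal_one
  rw [Matrix.det_add_replicateCol_mul_replicateRow hE, Matrix.det_diagonal, Matrix.det_unique, hinv]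
  simp only [Matrix.add_apply, Matrix.one_apply_eq, Matrix.mul_apply, Matrix.replicateRow_apply,
    Matrix.replicateCol_apply, Matrix.diagonal_apply, Finset.univ_unique,
    Finset.sum_singleton, mul_ite, mul_zero, ite_mul, zero_mul, Finset.sum_ite_eq,
    Finset.mem_univ, if_true, Finset.sum_ite_eq']
  rw [mul_add, mul_one, Finset.mul_sum, sub_eq_add_neg, ← Finset.sum_neg_distrib]
  congr 1
  refine Finset.sum_congr rfl fun j _ => ?_
  rw [← Finset.mul_prod_erase univ (fun i => x + d i) (mem_univ j)]
  have h := hx j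
  field_simp

/- **Theorem (Delorme).** -/
set_option synthInstance.maxHeartbeats 1000000 in
set_option maxHeartbeats 2000000 in
open scoped Classical in
/- ctx: The characteristic polynomial of (the adjacency matrix of)
the complete multipartite graph `K_{n_1,…,n_k}` of order `n = ∑ i, n i` equals
`λ^{n-k} (λ^k - ∑_{m=2}^{k} (m-1) σ_m λ^{k-m})`. -/
theorem adj_charpoly_completeMultipartite (k : ℕ) (n : Fin k → ℕ)
    (hn : ∀ i, 1 ≤ n i) :
    ((completeMultipartiteGraph fun i => Fin (n i)).adjMatrix ℝ).charpoly =
      X ^ ((∑ i, n i) - k) *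
        (X ^ k - ∑ m ∈ Finset.Icc 2 k, ((m : ℝ[X]) - 1) * C (esym n m) * X ^ (k - m)) := by
  have hcard : Fintype.card ((i : Fin k) × Fin (n i)) = ∑ i, n i := by
    simp [Fintype.card_sigma]
  have hkn : k ≤ ∑ i, n i := by
    calc k = ∑ _i : Fin k, 1 := by simp
    _ ≤ ∑ i, n i := Finset.sum_le_sum fun i _ => hn i
  set A := (completeMultipartiteGraph fun i => Fin (n i)).adjMatrix ℝ with hA
  have key : A.charpoly = X ^ ((∑ i, n i) - k) *
      ((∏ j, (X + C ((n j : ℝ))))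
        - ∑ j, C ((n j : ℝ)) * ∏ i ∈ univ.erase j, (X + C ((n i : ℝ)))) := by
    apply IsFractionRing.injective ℝ[X] (RatFunc ℝ)
    set φ := algebraMap ℝ[X] (RatFunc ℝ) with hφ
    set x := φ X with hxdef
    have hx0 : x ≠ 0 := by
      rw [hxdef]
      exact (map_ne_zero_iff φ (IsFractionRing.injective ℝ[X] (RatFunc ℝ))).mpr X_ne_zero
    set d : Fin k → RatFunc ℝ := fun j => ((n j : ℕ) : RatFunc ℝ) with hd
    have hφC : ∀ j : Fin k, φ (C ((n j : ℝ))) = d j := by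
      intro j
      rw [hd]
      rw [show ((n j : ℝ)) = (((n j : ℕ) : ℝ)) from rfl, Polynomial.C_eq_natCast,
        map_natCast φ]
    have hxd : ∀ j, x + d j ≠ 0 := by
      intro j
      rw [← hφC j, hxdef, ← map_add]
      exact (map_ne_zero_iff φ (IsFractionRing.injective ℝ[X] (RatFunc ℝ))).mpr
        (X_add_C_ne_zero _)
    set P : Matrix ((i : Fin k) × Fin (n i)) (Fin k) (RatFunc ℝ) :=
      Matrix.of fun v i => if v.1 = i then 1 else 0 with hP
    set Mk : Matrix (Fin k) (Fin k) (RatFunc ℝ) :=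
      Matrix.of fun i j => if i = j then (0 : RatFunc ℝ) else 1 with hMk
    -- entry computation for P * Mk * Pᵀ
    have hPMP : ∀ u v : (i : Fin k) × Fin (n i),
        (P * Mk * Pᵀ) u v = if u.1 = v.1 then 0 else 1 := by
      intro u v
      have h1 : ∀ j, (P * Mk) u j = Mk u.1 j := by
        intro j
        rw [Matrix.mul_apply]
        simp [hP, ite_mul, Finset.sum_ite_eq]
      rw [Matrix.mul_apply]
      simp only [Matrix.transpose_apply, h1]
      simp [hP, hMk, mul_ite, Finset.sum_ite_eq']
    have hchar : (charmatrix A).map φ = x • (1 : Matrix ((i : Fin k) × Fin (n i)) ((i : Fin k) × Fin (n i)) (RatFunc ℝ)) - P * Mk * Pᵀ := by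
      ext u v
      rw [Matrix.map_apply, Matrix.sub_apply, Matrix.smul_apply, hPMP u v]
      by_cases h : u = v
      · subst h
        rw [charmatrix_apply_eq, Matrix.one_apply_eq]
        have hAuu : A u u = 0 := by simp [hA]
        rw [hAuu, map_sub, map_zero, map_zero, if_pos rfl, sub_zero, sub_zero, smul_eq_mul,
          mul_one]
      · rw [charmatrix_apply_ne _ _ _ h, Matrix.one_apply_ne h]
        have hAuv : A u v = if u.1 = v.1 then 0 else 1 := by
          by_cases h2 : u.1 = v.1 <;> simp [hA, completeMultipartiteGraph, h2, h]
        rw [hAuv, smul_eq_mul, mul_zero, zero_sub]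
        by_cases h2 : u.1 = v.1 <;> simp [h2]
    have hPtP : Pᵀ * P = Matrix.diagonal d := by
      ext i j
      rw [Matrix.mul_apply, ← Finset.univ_sigma_univ, Finset.sum_sigma]
      by_cases h : i = j
      · subst h
        simp [hP, hd, Matrix.diagonal_apply_eq, Finset.sum_ite_eq]
      · rw [Matrix.diagonal_apply_ne _ h]
        apply Finset.sum_eq_zero
        intro a _
        apply Finset.sum_eq_zero
        intro b _
        by_cases h2 : a = i
        · subst h2
          simp [hP, h]
        · simp [hP, h2]
    -- determinant computation
    have hsplit : x • (1 : Matrix ((i : Fin k) × Fin (n i)) ((i : Fin k) × Fin (n i)) (RatFunc ℝ)) - P * Mk * Pᵀ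
        = x • ((1 : Matrix ((i : Fin k) × Fin (n i)) ((i : Fin k) × Fin (n i)) (RatFunc ℝ)) - (x⁻¹ • P) * (Mk * Pᵀ)) := by
      have h' : (x⁻¹ • P) * (Mk * Pᵀ) = x⁻¹ • (P * Mk * Pᵀ) := by
        rw [Matrix.smul_mul, Matrix.mul_assoc]
      rw [h', smul_sub, smul_smul, mul_inv_cancel₀ hx0, one_smul]
    have hcomm : ((1 : Matrix ((i : Fin k) × Fin (n i)) ((i : Fin k) × Fin (n i)) (RatFunc ℝ)) - (x⁻¹ • P) * (Mk * Pᵀ)).det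
        = ((1 : Matrix (Fin k) (Fin k) (RatFunc ℝ)) - x⁻¹ • (Mk * Matrix.diagonal d)).det := by
      rw [Matrix.det_one_sub_mul_comm]
      congr 2
      rw [Matrix.mul_smul, Matrix.mul_assoc, hPtP]
    have hrescale : (1 : Matrix (Fin k) (Fin k) (RatFunc ℝ)) - x⁻¹ • (Mk * Matrix.diagonal d)
        = x⁻¹ • (x • (1 : Matrix (Fin k) (Fin k) (RatFunc ℝ)) - Mk * Matrix.diagonal d) := by
      rw [smul_sub, smul_smul, inv_mul_cancel₀ hx0, one_smul]
    have hfinal : (x • (1 : Matrix (Fin k) (Fin k) (RatFunc ℝ)) - Mk * Matrix.diagonal d).det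
        = (∏ j, (x + d j)) - ∑ j, d j * ∏ i ∈ univ.erase j, (x + d i) :=
      det_diag_sub_rankone x d hxd
    have hLHS : φ A.charpoly
        = x ^ (∑ i, n i) * ((x⁻¹) ^ k *
            ((∏ j, (x + d j)) - ∑ j, d j * ∏ i ∈ univ.erase j, (x + d i))) := by
      have hcp : A.charpoly = (charmatrix A).det := rfl
      rw [hcp, RingHom.map_det, RingHom.mapMatrix_apply, hchar, hsplit, Matrix.det_smul, hcomm, hrescale,
        Matrix.det_smul, hfinal, hcard, Fintype.card_fin]
    rw [hLHS]
    rw [_root_.map_mul, map_pow, map_sub, map_sum, map_prod]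
    simp only [_root_.map_mul, _root_.map_add, map_prod, hφC, ← hxdef]
    -- now pure field algebra
    have hxk : x ^ (∑ i, n i) = x ^ ((∑ i, n i) - k) * x ^ k := by
      rw [← pow_add, Nat.sub_add_cancel hkn]
    rw [hxk, inv_pow]
    have hxkne : (x ^ k) ≠ 0 := pow_ne_zero _ hx0
    field_simp
  rw [key, vieta_combination k (fun j => (n j : ℝ))]
  simp only [esym]
end

section
/- Let K_{n_1,…,n_k} and K_{q_1,…,q_k} be two complete k-partite graphs (all n_i, q_i ≥ 1) that are Seidel cospectral, i.e., their Seidel matrices have the same characteristic polynomial. If n_i = q_j for some indices i, j with 1 ≤ i, j ≤ k, then there exists a permutation π of {1,…,k} such that n_i = q_{π(i)} for all i = 1,…,k. -/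
open Polynomial Matrix Finset SimpleGraph

namespace SeidelAux

lemma eval_charpoly' {V : Type*} [Fintype V] [DecidableEq V] (M : Matrix V V ℝ) (x : ℝ) :
    (M.charpoly).eval x = (x • (1 : Matrix V V ℝ) - M).det := by
  rw [Matrix.charpoly, ← coe_evalRingHom, RingHom.map_det]
  congr 1
  ext i j
  by_cases h : i = j <;>
    simp [charmatrix_apply, h, Matrix.one_apply, diagonal_apply]

variable {k : ℕ} (n : Fin k → ℕ)

noncomputable def Umat : Matrix ((i : Fin k) × Fin (n i)) (Fin k ⊕ Unit) ℝ :=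
  Matrix.of fun v s => Sum.elim (fun i => if v.1 = i then 1 else 0) (fun _ => 1) s

noncomputable def Wmat : Matrix (Fin k ⊕ Unit) ((i : Fin k) × Fin (n i)) ℝ :=
  Matrix.of fun s w => Sum.elim (fun i => if w.1 = i then -2 else 0) (fun _ => 1) s

noncomputable def Ppoly : ℝ[X] := ∏ i, (X - C (2 * (n i : ℝ)))

noncomputable def Hpoly : ℝ[X] :=
  Ppoly n + ∑ i, C (n i : ℝ) * ∏ j ∈ univ.erase i, (X - C (2 * (n j : ℝ)))

lemma decomp (x : ℝ) :
    x • (1 : Matrix ((i : Fin k) × Fin (n i)) _ ℝ)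
        - seidelMatrix (completeMultipartiteGraph fun i => Fin (n i))
      = (x + 1) • 1 + Umat n * Wmat n := by
  classical
  ext v w
  rw [Matrix.add_apply, Matrix.mul_apply, Fintype.sum_sum_type]
  simp only [Umat, Wmat, Matrix.of_apply, Sum.elim_inl, Sum.elim_inr, Finset.univ_unique,
    Finset.sum_const, Finset.card_singleton, one_smul, mul_one]
  have hsum : ∑ i : Fin k, (if v.1 = i then (1:ℝ) else 0) * (if w.1 = i then -2 else 0)
      = if v.1 = w.1 then -2 else 0 := by
    rw [Finset.sum_eq_single v.1]
    · rw [if_pos rfl, one_mul]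
      by_cases h : v.1 = w.1
      · rw [if_pos h.symm, if_pos h]
      · rw [if_neg h, if_neg (fun hh => h hh.symm)]
    · intro b _ hb
      rw [if_neg (fun hh => hb (hh.symm)), zero_mul]
    · simp
  rw [hsum]
  simp only [seidelMatrix, Matrix.sub_apply, Matrix.of_apply, Matrix.smul_apply,
    Matrix.one_apply, SimpleGraph.adjMatrix_apply, completeMultipartiteGraph,
    comap_adj, top_adj, smul_eq_mul]
  by_cases hvw : v = w
  · subst hvw; simp; ring
  · by_cases hb : v.1 = w.1
    · simp [hvw, hb]; ring
    · simp [hvw, hb]; ring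

lemma WU_eq : Wmat n * Umat n = fromBlocks
    (Matrix.diagonal fun i => -2 * (n i : ℝ))
    (Matrix.of fun i (_ : Unit) => -2 * (n i : ℝ))
    (Matrix.of fun (_ : Unit) j => (n j : ℝ))
    (Matrix.of fun _ _ => ((∑ i, n i : ℕ) : ℝ)) := by
  classical
  ext s t
  rw [Matrix.mul_apply]
  cases s with
  | inl i =>
    cases t with
    | inl j =>
      rw [← Finset.univ_sigma_univ, Finset.sum_sigma]
      simp only [Wmat, Umat, Matrix.of_apply, Sum.elim_inl, Finset.sum_const, card_univ,
        Fintype.card_fin, nsmul_eq_mul]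
      rw [Finset.sum_eq_single i (fun b _ hb => by simp [if_neg hb]) (by simp)]
      by_cases h : i = j
      · subst h; simp [fromBlocks, diagonal_apply]; ring
      · simp [fromBlocks, h, diagonal_apply_ne _ h]
    | inr u =>
      rw [← Finset.univ_sigma_univ, Finset.sum_sigma]
      simp only [Wmat, Umat, Matrix.of_apply, Sum.elim_inl, Sum.elim_inr, mul_one,
        Finset.sum_const, card_univ, Fintype.card_fin, nsmul_eq_mul]
      rw [Finset.sum_eq_single i (fun b _ hb => by simp [if_neg hb]) (by simp)]
      simp [fromBlocks]; ring
  | inr u =>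
    cases t with
    | inl j =>
      rw [← Finset.univ_sigma_univ, Finset.sum_sigma]
      simp only [Wmat, Umat, Matrix.of_apply, Sum.elim_inl, Sum.elim_inr, one_mul,
        Finset.sum_const, card_univ, Fintype.card_fin, nsmul_eq_mul]
      rw [Finset.sum_eq_single j (fun b _ hb => by simp [if_neg hb]) (by simp)]
      simp [fromBlocks]
    | inr u' =>
      simp only [Wmat, Umat, Matrix.of_apply, Sum.elim_inr, one_mul]
      rw [← Finset.univ_sigma_univ, Finset.sum_sigma]
      simp [fromBlocks]

lemma det_value (x : ℝ) (hx : x + 1 ≠ 0) (h2 : ∀ i, (1:ℝ) - 2 * (x+1)⁻¹ * n i ≠ 0) :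
    ((x+1) • (1 : Matrix ((i : Fin k) × Fin (n i)) _ ℝ) + Umat n * Wmat n).det
    = (x+1) ^ (∑ i, n i) * (∏ i, (1 - 2 * (x+1)⁻¹ * (n i : ℝ))) *
      (1 + (x+1)⁻¹ * ((∑ i, n i : ℕ) : ℝ)
        - ∑ j, ((x+1)⁻¹ * (n j : ℝ)) * ((1 - 2 * (x+1)⁻¹ * (n j : ℝ))⁻¹ * (-2 * ((x+1)⁻¹ * (n j : ℝ))))) := by
  classical
  set y : ℝ := x + 1 with hy
  have hcard : Fintype.card ((i : Fin k) × Fin (n i)) = ∑ i, n i := by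
    simp [Fintype.card_sigma]
  have hdetA : (y • (1 : Matrix ((i : Fin k) × Fin (n i)) _ ℝ)).det = y ^ (∑ i, n i) := by
    rw [det_smul, det_one, mul_one, hcard]
  have hA : IsUnit (y • (1 : Matrix ((i : Fin k) × Fin (n i)) _ ℝ)).det := by
    rw [hdetA]; exact isUnit_iff_ne_zero.2 (pow_ne_zero _ hx)
  rw [Matrix.det_add_mul (Umat n) (Wmat n) hA, hdetA]
  have hinv : (y • (1 : Matrix ((i : Fin k) × Fin (n i)) ((i : Fin k) × Fin (n i)) ℝ))⁻¹
      = y⁻¹ • (1 : Matrix ((i : Fin k) × Fin (n i)) ((i : Fin k) × Fin (n i)) ℝ) := by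
    apply inv_eq_right_inv
    rw [smul_mul_assoc, mul_smul_comm, one_mul, smul_smul, mul_inv_cancel₀ hx, one_smul]
  rw [hinv, Matrix.mul_smul, Matrix.mul_one, Matrix.smul_mul, WU_eq]
  set c : ℝ := y⁻¹ with hc
  have hsmall : (1 : Matrix (Fin k ⊕ Unit) _ ℝ) + c • fromBlocks
      (Matrix.diagonal fun i => -2 * (n i : ℝ))
      (Matrix.of fun i (_ : Unit) => -2 * (n i : ℝ))
      (Matrix.of fun (_ : Unit) j => (n j : ℝ))
      (Matrix.of fun _ _ => ((∑ i, n i : ℕ) : ℝ))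
      = fromBlocks (Matrix.diagonal fun i => 1 - 2 * c * (n i : ℝ))
        (Matrix.of fun i (_ : Unit) => c * (-2 * (n i : ℝ)))
        (Matrix.of fun (_ : Unit) j => c * (n j : ℝ))
        (Matrix.of fun _ _ => 1 + c * ((∑ i, n i : ℕ) : ℝ)) := by
    ext s t
    rcases s with i | u <;> rcases t with j | u'
    · by_cases h : i = j
      · subst h; simp [fromBlocks, Matrix.one_apply, Matrix.diagonal_apply_eq]; ring
      · simp [fromBlocks, Matrix.one_apply, Matrix.diagonal_apply, h]
    · simp [fromBlocks, Matrix.one_apply]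
    · simp [fromBlocks, Matrix.one_apply]
    · simp [fromBlocks, Matrix.one_apply]
  rw [hsmall]
  have hg : ∀ i : Fin k, (1 : ℝ) - 2 * c * (n i : ℝ) ≠ 0 := h2
  letI : Invertible (fun i => 1 - 2 * c * (n i : ℝ)) :=
    ⟨fun i => (1 - 2 * c * (n i : ℝ))⁻¹, funext fun i => by simp [inv_mul_cancel₀ (hg i)],
      funext fun i => by simp [mul_inv_cancel₀ (hg i)]⟩
  letI : Invertible (Matrix.diagonal fun i => 1 - 2 * c * (n i : ℝ)) :=
    Matrix.diagonalInvertible _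
  rw [Matrix.det_fromBlocks₁₁, Matrix.det_diagonal, Matrix.det_unique,
    Matrix.invOf_eq_nonsing_inv, Matrix.inv_diagonal]
  have hRi : Ring.inverse (fun i => 1 - 2 * c * (n i : ℝ)) = fun i => (1 - 2 * c * (n i : ℝ))⁻¹ :=
    Ring.inverse_invertible _
  rw [hRi]
  simp only [Matrix.sub_apply, Matrix.of_apply, Matrix.mul_apply, Matrix.diagonal_apply,
    mul_ite, mul_zero, Finset.sum_ite_eq', Finset.mem_univ, if_true, ite_mul, zero_mul]
  rw [mul_assoc]
  congr 2
  refine congrArg (fun z => 1 + c * ((∑ i, n i : ℕ):ℝ) - z) ?_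
  apply Finset.sum_congr rfl
  intro j _
  ring

lemma scalar_id (hn : ∀ i, 1 ≤ n i) (y : ℝ) (hy : y ≠ 0)
    (h2 : ∀ i, y - 2 * (n i : ℝ) ≠ 0) :
    y ^ (∑ i, n i) * (∏ i, (1 - 2 * y⁻¹ * (n i : ℝ))) *
      (1 + y⁻¹ * ((∑ i, n i : ℕ) : ℝ)
        - ∑ j, (y⁻¹ * (n j : ℝ)) * ((1 - 2 * y⁻¹ * (n j : ℝ))⁻¹ * (-2 * (y⁻¹ * (n j : ℝ)))))
    = y ^ ((∑ i, n i) - k) *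
      ((∏ i, (y - 2 * (n i : ℝ))) + ∑ i, (n i : ℝ) * ∏ j ∈ univ.erase i, (y - 2 * (n j : ℝ))) := by
  have key : ∀ i, (1:ℝ) - 2 * y⁻¹ * (n i : ℝ) = y⁻¹ * (y - 2 * (n i : ℝ)) := by
    intro i; field_simp
  have hk : k ≤ ∑ i, n i := by
    calc k = ∑ _i : Fin k, 1 := by simp
    _ ≤ ∑ i, n i := Finset.sum_le_sum (fun i _ => hn i)
  have hprod : (∏ i, ((1:ℝ) - 2 * y⁻¹ * (n i : ℝ))) = (y⁻¹) ^ k * ∏ i, (y - 2 * (n i : ℝ)) := by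
    simp_rw [key]
    rw [Finset.prod_mul_distrib, Finset.prod_const, card_univ, Fintype.card_fin]
  have hpow : y ^ (∑ i, n i) * (y⁻¹) ^ k = y ^ ((∑ i, n i) - k) := by
    rw [inv_pow, pow_sub₀ y hy hk]
  have hmain : (∏ i, (y - 2 * (n i : ℝ))) *
      (1 + y⁻¹ * ((∑ i, n i : ℕ) : ℝ)
        - ∑ j, (y⁻¹ * (n j : ℝ)) * ((1 - 2 * y⁻¹ * (n j : ℝ))⁻¹ * (-2 * (y⁻¹ * (n j : ℝ)))))
      = (∏ i, (y - 2 * (n i : ℝ))) + ∑ i, (n i : ℝ) * ∏ j ∈ univ.erase i, (y - 2 * (n j : ℝ)) := by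
    have h1 : ∀ j : Fin k, (∏ i, (y - 2 * (n i : ℝ))) *
        ((y⁻¹ * (n j : ℝ)) * ((1 - 2 * y⁻¹ * (n j : ℝ))⁻¹ * (-2 * (y⁻¹ * (n j : ℝ)))))
        = -(2 * y⁻¹ * (n j : ℝ)^2 * ∏ i ∈ univ.erase j, (y - 2 * (n i : ℝ))) := by
      intro j
      rw [key j, ← Finset.mul_prod_erase univ _ (mem_univ j), mul_inv, inv_inv]
      have e1 : (y - 2*(n j:ℝ)) * (y - 2*(n j:ℝ))⁻¹ = 1 := mul_inv_cancel₀ (h2 j)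
      have e2 : y⁻¹ * y = 1 := inv_mul_cancel₀ hy
      calc ((y - 2*(n j:ℝ)) * ∏ i ∈ univ.erase j, (y - 2*(n i:ℝ))) *
            ((y⁻¹ * (n j:ℝ)) * (y * (y - 2*(n j:ℝ))⁻¹ * (-2 * (y⁻¹ * (n j:ℝ)))))
          = ((y - 2*(n j:ℝ)) * (y - 2*(n j:ℝ))⁻¹) * ((y⁻¹ * y) *
              (-(2 * y⁻¹ * (n j:ℝ)^2 * ∏ i ∈ univ.erase j, (y - 2*(n i:ℝ))))) := by
            ring
      _ = -(2 * y⁻¹ * (n j : ℝ)^2 * ∏ i ∈ univ.erase j, (y - 2 * (n i : ℝ))) := by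
            rw [e1, e2, one_mul, one_mul]
    have h2' : (∏ i, (y - 2 * (n i : ℝ))) * (y⁻¹ * ((∑ i, n i : ℕ) : ℝ))
        = ∑ j, y⁻¹ * (n j : ℝ) * ((y - 2 * (n j : ℝ)) * ∏ i ∈ univ.erase j, (y - 2 * (n i : ℝ))) := by
      simp only [Nat.cast_sum, Finset.mul_sum]
      apply Finset.sum_congr rfl
      intro j _
      rw [← Finset.mul_prod_erase univ _ (mem_univ j)]
      ring
    rw [mul_sub, mul_add, mul_one, Finset.mul_sum]
    simp_rw [h1]
    rw [h2', add_sub_assoc, ← Finset.sum_sub_distrib]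
    congr 1
    apply Finset.sum_congr rfl
    intro j _
    have e2 : y⁻¹ * y = 1 := inv_mul_cancel₀ hy
    calc y⁻¹ * (n j:ℝ) * ((y - 2*(n j:ℝ)) * ∏ i ∈ univ.erase j, (y - 2*(n i:ℝ)))
          - -(2 * y⁻¹ * (n j:ℝ)^2 * ∏ i ∈ univ.erase j, (y - 2*(n i:ℝ)))
        = (y⁻¹ * y) * ((n j:ℝ) * ∏ i ∈ univ.erase j, (y - 2*(n i:ℝ))) := by ring
    _ = (n j:ℝ) * ∏ i ∈ univ.erase j, (y - 2*(n i:ℝ)) := by rw [e2, one_mul]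
  rw [hprod, show ∀ a b c d : ℝ, a * (b * c) * d = (a * b) * (c * d) from fun a b c d => by ring,
    hpow, hmain]

lemma charpoly_formula (hn : ∀ i, 1 ≤ n i) :
    (seidelMatrix (completeMultipartiteGraph fun i => Fin (n i))).charpoly
      = (X + 1) ^ ((∑ i, n i) - k) * (Hpoly n).comp (X + 1) := by
  classical
  apply Polynomial.eq_of_infinite_eval_eq
  have hfin : Set.Finite ({(-1 : ℝ)} ∪ (Set.range fun i : Fin k => 2 * (n i : ℝ) - 1)) :=
    (Set.finite_singleton _).union (Set.finite_range _)
  apply Set.Infinite.mono _ hfin.infinite_compl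
  intro x hx
  simp only [Set.mem_compl_iff, Set.mem_union, Set.mem_singleton_iff, Set.mem_range,
    not_or, not_exists] at hx
  obtain ⟨hx1, hx2⟩ := hx
  have hy : x + 1 ≠ 0 := fun h => hx1 (by linarith)
  have h2 : ∀ i, x + 1 - 2 * (n i : ℝ) ≠ 0 := by
    intro i h
    exact hx2 i (by linarith)
  have h2' : ∀ i, (1:ℝ) - 2 * (x+1)⁻¹ * n i ≠ 0 := by
    intro i h
    apply h2 i
    have := congrArg (fun t => (x+1) * t) h
    field_simp at this
    linarith [this]
  show _ = _
  rw [eval_charpoly', decomp, det_value n x hy h2', scalar_id n hn (x+1) hy h2]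
  rw [eval_mul, eval_pow, eval_add, eval_X, eval_one, eval_comp, Hpoly, Ppoly]
  simp only [eval_add, eval_prod, eval_finset_sum, eval_mul, eval_sub, eval_X, eval_C, eval_one]

lemma hder : derivative (Ppoly n) = ∑ i, ∏ j ∈ univ.erase i, (X - C (2*(n j:ℝ))) := by
  classical
  rw [Ppoly, Finset.prod_eq_multiset_prod, derivative_prod, Finset.sum_eq_multiset_sum]
  apply congrArg Multiset.sum
  apply Multiset.map_congr rfl
  intro i _
  rw [Finset.prod_eq_multiset_prod, Finset.erase_val]
  simp

lemma key_rel : (X : ℝ[X]) * derivative (Ppoly n) + 2 * Ppoly n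
    = 2 * Hpoly n + (k : ℝ[X]) * Ppoly n := by
  classical
  rw [hder, Finset.mul_sum]
  have hterm : ∀ i ∈ (univ : Finset (Fin k)),
      (X:ℝ[X]) * ∏ j ∈ univ.erase i, (X - C (2*(n j:ℝ)))
      = Ppoly n + C (2*(n i:ℝ)) * ∏ j ∈ univ.erase i, (X - C (2*(n j:ℝ))) := by
    intro i _
    rw [Ppoly, ← Finset.mul_prod_erase univ _ (mem_univ i)]
    ring
  rw [Finset.sum_congr rfl hterm, Finset.sum_add_distrib, Finset.sum_const, card_univ,
    Fintype.card_fin, Hpoly]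
  have hC : ∑ i, C (2*(n i:ℝ)) * ∏ j ∈ univ.erase i, (X - C (2*(n j:ℝ)))
      = 2 * ∑ i, C ((n i:ℝ)) * ∏ j ∈ univ.erase i, (X - C (2*(n j:ℝ))) := by
    rw [Finset.mul_sum]
    apply Finset.sum_congr rfl
    intro i _
    rw [Polynomial.C_mul, map_ofNat]
    ring
  rw [hC, nsmul_eq_mul]
  ring

end SeidelAux

open SeidelAux

/-- **Theorem.** If the complete `k`-partite graphs `K_{n_1,…,n_k}` and
`K_{q_1,…,q_k}` are Seidel cospectral (their Seidel matrices have the same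
characteristic polynomial) and `n i = q j` for some `i, j`, then there is a
permutation `π` with `n i = q (π i)` for all `i`. -/
theorem seidel_cospectral_multipartite_perm (k : ℕ) (n q : Fin k → ℕ)
    (hn : ∀ i, 1 ≤ n i) (hq : ∀ i, 1 ≤ q i)
    (hcospec : (seidelMatrix (completeMultipartiteGraph fun i => Fin (n i))).charpoly =
      (seidelMatrix (completeMultipartiteGraph fun i => Fin (q i))).charpoly)
    (hmatch : ∃ i j, n i = q j) :
    ∃ π : Equiv.Perm (Fin k), ∀ i, n i = q (π i) := by
  classical
  obtain ⟨i₀, j₀, hij⟩ := hmatch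
  have hNdeg : ∀ (m : Fin k → ℕ),
      (seidelMatrix (completeMultipartiteGraph fun i => Fin (m i))).charpoly.natDegree
        = ∑ i, m i := by
    intro m
    rw [Matrix.charpoly_natDegree_eq_dim]
    simp [Fintype.card_sigma]
  have hN : ∑ i, n i = ∑ i, q i := by rw [← hNdeg n, ← hNdeg q, hcospec]
  have hXne : ((X : ℝ[X]) + 1) ≠ 0 := fun h => by simpa using congrArg (eval 0) h
  have hcomp : (Hpoly n).comp (X+1) = (Hpoly q).comp (X+1) := by
    apply mul_left_cancel₀ (pow_ne_zero ((∑ i, n i) - k) hXne)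
    rw [← charpoly_formula n hn, hcospec, charpoly_formula q hq, hN]
  have hH : Hpoly n = Hpoly q := by
    have h2 := congrArg (fun p : ℝ[X] => p.comp (X - Polynomial.C 1)) hcomp
    simpa [Polynomial.comp_assoc, add_comp, X_comp, one_comp, sub_add_cancel] using h2
  set D : ℝ[X] := Ppoly n - Ppoly q with hD
  have hrel : (X:ℝ[X]) * derivative D + 2 * D = (k:ℝ[X]) * D := by
    have h1 := key_rel n
    have h2 := key_rel q
    rw [hH] at h1
    rw [hD, derivative_sub]
    linear_combination h1 - h2
  have hcoeff : ∀ m : ℕ, ((m:ℝ) + 2) * D.coeff m = (k:ℝ) * D.coeff m := by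
    intro m
    have h := congrArg (fun p : ℝ[X] => p.coeff m) hrel
    simp only [coeff_add] at h
    have hk : ((k : ℝ[X]) * D).coeff m = (k:ℝ) * D.coeff m := by
      rw [← Polynomial.C_eq_natCast, coeff_C_mul]
    have h2 : ((2 : ℝ[X]) * D).coeff m = 2 * D.coeff m := by
      rw [show (2 : ℝ[X]) = Polynomial.C 2 from (map_ofNat _ 2).symm, coeff_C_mul]
    rw [hk, h2] at h
    cases m with
    | zero =>
      rw [Polynomial.mul_coeff_zero, Polynomial.coeff_X_zero, zero_mul] at h
      push_cast
      linarith [h]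
    | succ t =>
      rw [Polynomial.coeff_X_mul, Polynomial.coeff_derivative] at h
      push_cast
      linarith [h]
  have hz : ∀ m : ℕ, m + 2 ≠ k → D.coeff m = 0 := by
    intro m hm
    by_contra h
    have := mul_right_cancel₀ h (hcoeff m)
    apply hm
    exact_mod_cast this
  have hDeq : D = Polynomial.C (D.coeff (k-2)) * X^(k-2) := by
    ext m
    rw [coeff_C_mul, coeff_X_pow]
    by_cases hm : m = k - 2
    · subst hm; simp
    · rw [if_neg hm, mul_zero]
      apply hz m
      intro hmk
      exact hm (by omega)
  set r : ℝ := 2 * (n i₀ : ℝ) with hr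
  have hevn : (Ppoly n).eval r = 0 := by
    rw [Ppoly, eval_prod]
    exact Finset.prod_eq_zero (mem_univ i₀) (by simp [hr])
  have hevq : (Ppoly q).eval r = 0 := by
    rw [Ppoly, eval_prod]
    exact Finset.prod_eq_zero (mem_univ j₀) (by simp [hr, hij])
  have hevD : D.eval r = 0 := by rw [hD, eval_sub, hevn, hevq, sub_zero]
  have hrne : r ≠ 0 := by
    have : (1:ℝ) ≤ (n i₀ : ℝ) := by exact_mod_cast hn i₀
    rw [hr]; positivity
  have hc0 : D.coeff (k-2) = 0 := by
    have h := hevD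
    rw [hDeq] at h
    simp only [eval_mul, eval_C, eval_pow, eval_X] at h
    rcases mul_eq_zero.1 h with h' | h'
    · exact h'
    · exact absurd h' (pow_ne_zero _ hrne)
  have hPP : Ppoly n = Ppoly q := by
    have : D = 0 := by rw [hDeq, hc0]; simp
    exact sub_eq_zero.1 this
  have hroots : Multiset.map (fun i => 2*((n i):ℝ)) univ.val
      = Multiset.map (fun i => 2*((q i):ℝ)) univ.val := by
    have key : ∀ m : Fin k → ℕ, (Ppoly m).roots = Multiset.map (fun i => 2*((m i):ℝ)) univ.val := by
      intro m
      rw [Ppoly, Finset.prod_eq_multiset_prod]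
      have hmm : Multiset.map (fun i => X - Polynomial.C (2*((m i):ℝ))) univ.val
          = Multiset.map (fun a : ℝ => X - Polynomial.C a)
            (Multiset.map (fun i => 2*((m i):ℝ)) univ.val) := by
        rw [Multiset.map_map]; rfl
      rw [hmm, roots_multiset_prod_X_sub_C]
    rw [← key n, ← key q, hPP]
  have hmul : Multiset.map n univ.val = Multiset.map q univ.val := by
    have hinj : Function.Injective (fun m : ℕ => 2*(m:ℝ)) := by
      intro a b hab
      simp only at hab
      exact_mod_cast mul_left_cancel₀ (two_ne_zero) hab
    apply Multiset.map_injective hinj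
    rw [Multiset.map_map, Multiset.map_map]
    exact hroots
  have hlist : (List.ofFn n).Perm (List.ofFn q) := by
    rw [← Multiset.coe_eq_coe, ← Fin.univ_val_map, ← Fin.univ_val_map]
    exact hmul
  set σ := Tuple.sort n with hσ
  set τ := Tuple.sort q with hτ
  have hperm : (List.ofFn (n ∘ σ)).Perm (List.ofFn (q ∘ τ)) :=
    (σ.ofFn_comp_perm n).trans (hlist.trans (τ.ofFn_comp_perm q).symm)
  have heq : List.ofFn (n ∘ σ) = List.ofFn (q ∘ τ) :=
    List.Perm.eq_of_sortedLE (Tuple.monotone_sort n).sortedLE_ofFn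
      (Tuple.monotone_sort q).sortedLE_ofFn hperm
  have hfun : n ∘ σ = q ∘ τ := List.ofFn_injective heq
  refine ⟨σ.symm.trans τ, fun i => ?_⟩
  have := congrFun hfun (σ.symm i)
  simpa using this
end

section
/- Let n_1 ≥ n_2 ≥ ⋯ ≥ n_k ≥ 1 and q_1 ≥ q_2 ≥ ⋯ ≥ q_k ≥ 1 be two different k-tuples with k ≥ 3 and ∑_{i=1}^k n_i = ∑_{i=1}^k q_i. Then the complete k-partite graphs K_{n_1,…,n_k} and K_{q_1,…,q_k} are not switching equivalent. -/
open Polynomial Matrix Finset SimpleGraph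

/-- Two graphs on the same vertex set are switching equivalent iff their Seidel
matrices are conjugate by a diagonal `±1` matrix. -/
def SwitchingEquiv {V : Type*} [Fintype V] [DecidableEq V]
    (G H : SimpleGraph V) : Prop :=
  ∃ ε : V → ℝ, (∀ v, ε v = 1 ∨ ε v = -1) ∧
    seidelMatrix H = Matrix.diagonal ε * seidelMatrix G * Matrix.diagonal ε

/-- A graph `G` is determined, up to switching, by its Seidel spectrum
(`S`-determined) if every graph with the same Seidel spectrum is switching
equivalent to a graph isomorphic to `G`. -/
def SDetermined {V : Type} [Fintype V] [DecidableEq V] (G : SimpleGraph V) : Prop :=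
  ∀ (W : Type) [Fintype W] [DecidableEq W] (H : SimpleGraph W),
    (seidelMatrix H).charpoly = (seidelMatrix G).charpoly →
    ∃ H' : SimpleGraph W, SwitchingEquiv H H' ∧ Nonempty (H' ≃g G)

open scoped Classical in
lemma seidelMatrix_apply {V : Type*} [Fintype V] [DecidableEq V] (G : SimpleGraph V) (u v : V) :
    seidelMatrix G u v = if u = v then 0 else if G.Adj u v then -1 else 1 := by
  simp only [seidelMatrix, Matrix.sub_apply, Matrix.of_apply, Matrix.one_apply,
    Matrix.smul_apply, SimpleGraph.adjMatrix_apply, smul_eq_mul]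
  by_cases h : u = v
  · subst h; simp
  · by_cases ha : G.Adj u v <;> simp [h, ha] <;> ring

open scoped Classical in
lemma cmp_seidel_apply {k : ℕ} (n : Fin k → ℕ) (a b : (i : Fin k) × Fin (n i)) :
    seidelMatrix (completeMultipartiteGraph fun i => Fin (n i)) a b
      = if a = b then 0 else if a.1 = b.1 then 1 else -1 := by
  rw [seidelMatrix_apply]
  by_cases h : a = b
  · simp [h]
  · rw [if_neg h, if_neg h]
    by_cases h2 : a.1 = b.1
    · rw [if_neg (by simp [h2]), if_pos h2]
    · rw [if_pos (by simp [h2]), if_neg h2]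

lemma cmp_P_iff {k : ℕ} (hk : 3 ≤ k) (n : Fin k → ℕ) (hn1 : ∀ i, 1 ≤ n i)
    (u v : (i : Fin k) × Fin (n i)) (huv : u ≠ v) :
    (∀ w, seidelMatrix (completeMultipartiteGraph fun i => Fin (n i)) u v *
      seidelMatrix (completeMultipartiteGraph fun i => Fin (n i)) v w *
      seidelMatrix (completeMultipartiteGraph fun i => Fin (n i)) w u ≠ -1) ↔ u.1 = v.1 := by
  constructor
  · intro hP
    by_contra hne
    obtain ⟨j, hju, hjv⟩ : ∃ j : Fin k, j ≠ u.1 ∧ j ≠ v.1 := by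
      by_contra hcon
      push_neg at hcon
      have hsub : (Finset.univ : Finset (Fin k)) ⊆ {u.1, v.1} := by
        intro j _
        by_cases h : j = u.1
        · simp [h]
        · simp [hcon j h]
      have h2 := Finset.card_le_card hsub
      rw [Finset.card_univ, Fintype.card_fin] at h2
      have h3 : ({u.1, v.1} : Finset (Fin k)).card ≤ 2 :=
        (Finset.card_insert_le _ _).trans (by simp)
      omega
    set w : (i : Fin k) × Fin (n i) := ⟨j, ⟨0, hn1 j⟩⟩ with hw
    have h1 : w ≠ u := fun hc => hju (by rw [← hc])
    have h2 : w ≠ v := fun hc => hjv (by rw [← hc])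
    refine hP w ?_
    rw [cmp_seidel_apply, cmp_seidel_apply, cmp_seidel_apply,
      if_neg huv, if_neg hne, if_neg (Ne.symm h2), if_neg (fun hc => hjv hc.symm),
      if_neg h1, if_neg hju]
    norm_num
  · intro heq w
    rw [cmp_seidel_apply, cmp_seidel_apply, cmp_seidel_apply, if_neg huv, if_pos heq]
    by_cases h1 : w = u
    · subst h1; simp
    · by_cases h2 : v = w
      · subst h2; simp
      · rw [if_neg h2, if_neg h1]
        by_cases h3 : w.1 = u.1
        · rw [if_pos (heq ▸ h3.symm : v.fst = w.fst), if_pos h3]; norm_num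
        · rw [if_neg (fun hc : v.fst = w.fst => h3 (hc ▸ heq).symm), if_neg h3]; norm_num

lemma antitone_eq_of_map_univ_eq {k : ℕ} {n q : Fin k → ℕ} (hna : Antitone n) (hqa : Antitone q)
    (h : Finset.univ.val.map n = Finset.univ.val.map q) : n = q := by
  rw [Fin.univ_val_map, Fin.univ_val_map] at h
  have hperm := Multiset.coe_eq_coe.mp h
  refine List.ofFn_injective (List.Perm.eq_of_pairwise' (r := (· ≥ ·)) ?_ ?_ hperm)
  · exact List.pairwise_ofFn.mpr fun i j hij => hna hij.le
  · exact List.pairwise_ofFn.mpr fun i j hij => hqa hij.le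

lemma part_card {k : ℕ} (n : Fin k → ℕ) (i : Fin k) :
    (Finset.univ.filter (fun v : (j : Fin k) × Fin (n j) => v.1 = i)).card = n i := by
  have : (Finset.univ.filter (fun v : (j : Fin k) × Fin (n j) => v.1 = i))
      = Finset.sigma {i} (fun _ => Finset.univ) := by
    ext ⟨j, x⟩
    simp [Finset.mem_sigma]
  rw [this, Finset.card_sigma, Finset.sum_singleton]
  simp


/-- **Theorem.** If `n_1 ≥ ⋯ ≥ n_k ≥ 1` and `q_1 ≥ ⋯ ≥ q_k ≥ 1` are two
different `k`-tuples, `k ≥ 3`, with `∑ n_i = ∑ q_i`, then `K_{n_1,…,n_k}` and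
`K_{q_1,…,q_k}` are not switching equivalent (no graph on the vertex set of the
first is both switching equivalent to it and isomorphic to the second). -/
theorem multipartite_not_switchingEquiv (k : ℕ) (hk : 3 ≤ k) (n q : Fin k → ℕ)
    (hn1 : ∀ i, 1 ≤ n i) (hq1 : ∀ i, 1 ≤ q i)
    (hna : Antitone n) (hqa : Antitone q) (hne : n ≠ q)
    (hsum : ∑ i, n i = ∑ i, q i) :
    ¬ ∃ H : SimpleGraph ((i : Fin k) × Fin (n i)),
        SwitchingEquiv (completeMultipartiteGraph fun i => Fin (n i)) H ∧
        Nonempty (H ≃g completeMultipartiteGraph fun i => Fin (q i)) := by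

  classical
  rintro ⟨H, ⟨ε, hε, hS⟩, ⟨φ⟩⟩
  set G := completeMultipartiteGraph fun i => Fin (n i) with hG
  set Gq := completeMultipartiteGraph fun i => Fin (q i) with hGq
  have hsq : ∀ v, ε v * ε v = 1 := fun v => by rcases hε v with h | h <;> rw [h] <;> norm_num
  have hent : ∀ u v, seidelMatrix H u v = ε u * seidelMatrix G u v * ε v := by
    intro u v
    rw [hS, Matrix.mul_diagonal, Matrix.diagonal_mul]
  have htr : ∀ u v w, seidelMatrix H u v * seidelMatrix H v w * seidelMatrix H w u
      = seidelMatrix G u v * seidelMatrix G v w * seidelMatrix G w u := by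
    intro u v w
    rw [hent u v, hent v w, hent w u]
    calc (ε u * seidelMatrix G u v * ε v) * (ε v * seidelMatrix G v w * ε w) *
          (ε w * seidelMatrix G w u * ε u)
        = (ε u * ε u) * ((ε v * ε v) * ((ε w * ε w) *
            (seidelMatrix G u v * (seidelMatrix G v w * seidelMatrix G w u)))) := by ring
      _ = seidelMatrix G u v * seidelMatrix G v w * seidelMatrix G w u := by
            rw [hsq, hsq, hsq]; ring
  set e := φ.toEquiv with he
  have hadj : ∀ u v, H.Adj u v ↔ Gq.Adj (e u) (e v) := fun u v => φ.map_adj_iff.symm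
  have hHs : ∀ u v, seidelMatrix H u v = seidelMatrix Gq (e u) (e v) := by
    intro u v
    rw [seidelMatrix_apply, seidelMatrix_apply]
    by_cases h : u = v
    · simp [h]
    · rw [if_neg h, if_neg (fun hc => h (e.injective hc))]
      by_cases ha : H.Adj u v
      · rw [if_pos ha, if_pos ((hadj u v).mp ha)]
      · rw [if_neg ha, if_neg (fun hc => ha ((hadj u v).mpr hc))]
  have hchain : ∀ u v w, seidelMatrix G u v * seidelMatrix G v w * seidelMatrix G w u
      = seidelMatrix Gq (e u) (e v) * seidelMatrix Gq (e v) (e w) *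
        seidelMatrix Gq (e w) (e u) := by
    intro u v w; rw [← htr, hHs, hHs, hHs]
  have key : ∀ u v : (i : Fin k) × Fin (n i), u.1 = v.1 ↔ (e u).1 = (e v).1 := by
    intro u v
    by_cases huv : u = v
    · simp [huv]
    · rw [← cmp_P_iff hk n hn1 u v huv,
        ← cmp_P_iff hk q hq1 (e u) (e v) (fun hc => huv (e.injective hc))]
      constructor
      · intro hP w'
        have h := hP (e.symm w')
        rw [hchain, e.apply_symm_apply] at h
        exact h
      · intro hP w
        rw [hchain]
        exact hP (e w)
  set σ : Fin k → Fin k := fun i => (e ⟨i, ⟨0, hn1 i⟩⟩).1 with hσ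
  have hσinj : Function.Injective σ := by
    intro i j hij
    exact (key ⟨i, ⟨0, hn1 i⟩⟩ ⟨j, ⟨0, hn1 j⟩⟩).mpr hij
  have hcard : ∀ i, n i = q (σ i) := by
    intro i
    rw [← part_card n i, ← part_card q (σ i)]
    apply Finset.card_bij (fun v _ => e v)
    · intro a ha
      simp only [Finset.mem_filter, Finset.mem_univ, true_and] at ha ⊢
      exact (key a ⟨i, ⟨0, hn1 i⟩⟩).mp ha
    · intro a _ b _ hab
      exact e.injective hab
    · intro b hb
      simp only [Finset.mem_filter, Finset.mem_univ, true_and] at hb ⊢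
      refine ⟨e.symm b, ?_, e.apply_symm_apply b⟩
      exact (key (e.symm b) ⟨i, ⟨0, hn1 i⟩⟩).mpr (by rw [e.apply_symm_apply]; exact hb)
  have hbij : Function.Bijective σ := Finite.injective_iff_bijective.mp hσinj
  have hmul : Finset.univ.val.map n = Finset.univ.val.map q := by
    set e2 : Fin k ≃ Fin k := Equiv.ofBijective σ hbij with he2
    have huniv : Finset.univ.val.map σ = Finset.univ.val := by
      calc Finset.univ.val.map σ = (Finset.univ.map e2.toEmbedding).val := by
            rw [Finset.map_val]; rfl
        _ = Finset.univ.val := by rw [Finset.map_univ_equiv]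
    calc Finset.univ.val.map n = Finset.univ.val.map (q ∘ σ) :=
          Multiset.map_congr rfl (fun i _ => hcard i)
      _ = (Finset.univ.val.map σ).map q := by rw [Multiset.map_map]
      _ = Finset.univ.val.map q := by rw [huniv]
  exact hne (antitone_eq_of_map_univ_eq hna hqa hmul)
end

section
/- Let n_1 ≥ n_2 ≥ ⋯ ≥ n_k ≥ 1 and let λ_1 ≥ λ_2 ≥ ⋯ ≥ λ_{k−1} be the positive Seidel eigenvalues (with multiplicity) of the complete k-partite graph K_{n_1,…,n_k}. Then 2n_{i+1} − 1 ≤ λ_i ≤ 2n_i − 1 for every i = 1,…,k−1; in particular 2n_k − 1 ≤ λ_{k−1} ≤ ⋯ ≤ 2n_2 − 1 ≤ λ_1 ≤ 2n_1 − 1. -/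
open Polynomial Matrix Finset SimpleGraph

open scoped RealInnerProductSpace

section SpectralCounting
set_option linter.unusedSectionVars false
variable {V : Type*} [Fintype V] [DecidableEq V]

lemma dot_eq_inner (x y : EuclideanSpace ℝ V) : x ⬝ᵥ y = ⟪x, y⟫ := by
  simp [dotProduct, PiLp.inner_apply, RCLike.inner_apply, mul_comm]

lemma repr_zero_of_mem_span {ι E : Type*} [Fintype ι] [DecidableEq ι] [NormedAddCommGroup E]
    [InnerProductSpace ℝ E] (b : OrthonormalBasis ι ℝ E) (s : Set ι) {x : E}
    (hx : x ∈ Submodule.span ℝ (⇑b '' s)) {i : ι} (hi : i ∉ s) :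
    b.repr x i = 0 := by
  induction hx using Submodule.span_induction with
  | mem y hy =>
    obtain ⟨j, hj, rfl⟩ := hy
    rw [b.repr_self, EuclideanSpace.single_apply, if_neg (by rintro rfl; exact hi hj)]
  | zero => simp
  | add y z _ _ hy hz => simp [hy, hz]
  | smul c y _ hy => simp [hy]

lemma finrank_span_img {ι E : Type*} [Fintype ι] [DecidableEq ι] [NormedAddCommGroup E]
    [InnerProductSpace ℝ E] (b : OrthonormalBasis ι ℝ E) (s : Finset ι) :
    Module.finrank ℝ (Submodule.span ℝ (⇑b '' ↑s)) = s.card := by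
  have li : LinearIndependent ℝ (fun j : {x // x ∈ s} => b j) :=
    (b.orthonormal.linearIndependent).comp _ Subtype.val_injective
  rw [show ⇑b '' ↑s = Set.range (fun j : {x // x ∈ s} => b j) by
    simp [Set.image_eq_range]]
  rw [finrank_span_eq_card li, Fintype.card_coe]

lemma mulVec_eq_sum_eig {A : Matrix V V ℝ} (hA : A.IsHermitian) (x : EuclideanSpace ℝ V) :
    (WithLp.toLp 2 (A *ᵥ x) : EuclideanSpace ℝ V)
      = ∑ v, (hA.eigenvalues v * hA.eigenvectorBasis.repr x v) • hA.eigenvectorBasis v := by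
  set b := hA.eigenvectorBasis
  have h0 : (WithLp.toLp 2 (A *ᵥ x) : EuclideanSpace ℝ V) = WithLp.toLp 2 (A *ᵥ ⇑(∑ v, b.repr x v • b v : EuclideanSpace ℝ V)) := by
    rw [b.sum_repr x]
  rw [h0]
  have h1 : A *ᵥ ⇑(∑ v, b.repr x v • b v : EuclideanSpace ℝ V)
      = ∑ v, b.repr x v • (A *ᵥ (b v : V → ℝ)) := by
    simp [WithLp.ofLp_sum, Matrix.mulVec_sum, Matrix.mulVec_smul]
  rw [h1, WithLp.toLp_sum]
  refine Finset.sum_congr rfl fun v _ => ?_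
  have h2 : (A *ᵥ (b v : V → ℝ)) = hA.eigenvalues v • (b v : V → ℝ) := hA.mulVec_eigenvectorBasis v
  calc WithLp.toLp 2 (b.repr x v • (A *ᵥ (b v : V → ℝ)))
      = b.repr x v • (hA.eigenvalues v • b v) := by rw [h2, WithLp.toLp_smul, WithLp.toLp_smul, WithLp.toLp_ofLp]
    _ = (hA.eigenvalues v * b.repr x v) • b v := by rw [smul_smul, mul_comm]

lemma quad_eq_sum_eig {A : Matrix V V ℝ} (hA : A.IsHermitian) (x : EuclideanSpace ℝ V) :
    x ⬝ᵥ (A *ᵥ x) = ∑ v, hA.eigenvalues v * (hA.eigenvectorBasis.repr x v)^2 := by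
  set b := hA.eigenvectorBasis
  have : x ⬝ᵥ (A *ᵥ x) = ⟪x, (WithLp.toLp 2 (A *ᵥ x) : EuclideanSpace ℝ V)⟫ := dot_eq_inner x (WithLp.toLp 2 (A *ᵥ x))
  rw [this, mulVec_eq_sum_eig hA x, inner_sum]
  refine Finset.sum_congr rfl fun v _ => ?_
  have hxv : ⟪x, (b v : EuclideanSpace ℝ V)⟫ = b.repr x v := by
    rw [real_inner_comm]; exact (b.repr_apply_apply x v).symm
  rw [real_inner_smul_right, hxv]
  ring

lemma dot_self_eq_sum_repr {ι E : Type*} [Fintype ι] [NormedAddCommGroup E]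
    [InnerProductSpace ℝ E] (b : OrthonormalBasis ι ℝ E) (x : E) :
    ⟪x, x⟫ = ∑ v, (b.repr x v)^2 := by
  conv_lhs => rw [show x = ∑ v, b.repr x v • b v from (b.sum_repr x).symm]
  rw [sum_inner]
  refine Finset.sum_congr rfl fun v _ => ?_
  rw [real_inner_smul_left, ← b.repr_apply_apply, b.sum_repr]
  ring

/-- a common skeleton: a nonzero vector in `span (b '' s) ⊓ W`. -/
lemma exists_nonzero_inter {A : Matrix V V ℝ} (hA : A.IsHermitian)
    (s : Finset V) (W : Submodule ℝ (EuclideanSpace ℝ V))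
    (hdim : Fintype.card V < s.card + Module.finrank ℝ W) :
    ∃ x : EuclideanSpace ℝ V, x ≠ 0 ∧ x ∈ W ∧
      (∀ v ∉ s, hA.eigenvectorBasis.repr x v = 0) := by
  set b := hA.eigenvectorBasis
  set U := Submodule.span ℝ (⇑b '' ↑s)
  have hU : Module.finrank ℝ U = s.card := finrank_span_img b s
  have hnd : ¬ Disjoint U W := by
    intro hd
    have := Submodule.finrank_add_finrank_le_of_disjoint hd
    rw [hU, finrank_euclideanSpace] at this
    omega
  rw [Submodule.disjoint_def] at hnd
  push_neg at hnd
  obtain ⟨x, hxU, hxW, hx0⟩ := hnd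
  exact ⟨x, hx0, hxW, fun v hv => repr_zero_of_mem_span b _ hxU hv⟩

lemma count_le_of_subspace {A : Matrix V V ℝ} (hA : A.IsHermitian) {t : ℝ} {d : ℕ}
    (W : Submodule ℝ (EuclideanSpace ℝ V)) (hW : Fintype.card V ≤ Module.finrank ℝ W + d)
    (hq : ∀ x ∈ W, x ⬝ᵥ (A *ᵥ x) ≤ t * (x ⬝ᵥ x)) :
    (univ.filter fun v => t < hA.eigenvalues v).card ≤ d := by
  by_contra hc
  push_neg at hc
  set b := hA.eigenvectorBasis
  obtain ⟨x, hx0, hxW, hxs⟩ := exists_nonzero_inter hA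
    (univ.filter fun v => t < hA.eigenvalues v) W (by omega)
  have hr0 : ∃ v, b.repr x v ≠ 0 := by
    by_contra h
    push_neg at h
    apply hx0
    have : b.repr x = 0 := by ext v; simpa using h v
    simpa using b.repr.map_eq_zero_iff.mp (by ext v; simpa using h v)
  obtain ⟨v0, hv0⟩ := hr0
  have hv0s : v0 ∈ univ.filter fun v => t < hA.eigenvalues v := by
    by_contra h
    exact hv0 (hxs v0 h)
  have hlt : t * (x ⬝ᵥ x) < x ⬝ᵥ (A *ᵥ x) := by
    rw [quad_eq_sum_eig hA x, dot_eq_inner, dot_self_eq_sum_repr b x, Finset.mul_sum]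
    refine Finset.sum_lt_sum (fun v _ => ?_) ⟨v0, Finset.mem_univ v0, ?_⟩
    · by_cases hv : v ∈ univ.filter fun v => t < hA.eigenvalues v
      · have := (Finset.mem_filter.mp hv).2
        nlinarith [sq_nonneg (b.repr x v)]
      · rw [hxs v hv]; simp
    · have := (Finset.mem_filter.mp hv0s).2
      have h2 : 0 < (b.repr x v0)^2 := by positivity
      nlinarith
  exact absurd (hq x hxW) (not_le.mpr hlt)

lemma count_ge_of_subspace {A : Matrix V V ℝ} (hA : A.IsHermitian) {t : ℝ} {d : ℕ}
    (W : Submodule ℝ (EuclideanSpace ℝ V)) (hW : d ≤ Module.finrank ℝ W)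
    (hq : ∀ x ∈ W, t * (x ⬝ᵥ x) ≤ x ⬝ᵥ (A *ᵥ x)) :
    d ≤ (univ.filter fun v => t ≤ hA.eigenvalues v).card := by
  by_contra hc
  push_neg at hc
  set b := hA.eigenvectorBasis
  set s : Finset V := univ.filter fun v => t ≤ hA.eigenvalues v
  have hcard : sᶜ.card = Fintype.card V - s.card := by
    rw [Finset.card_compl]
  obtain ⟨x, hx0, hxW, hxs⟩ := exists_nonzero_inter hA sᶜ W (by
    have hsle : s.card ≤ Fintype.card V := Finset.card_le_univ s
    omega)
  have hr0 : ∃ v, b.repr x v ≠ 0 := by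
    by_contra h
    push_neg at h
    exact hx0 (by simpa using b.repr.map_eq_zero_iff.mp (by ext v; simpa using h v))
  obtain ⟨v0, hv0⟩ := hr0
  have hv0s : v0 ∉ s := by
    intro h
    exact hv0 (hxs v0 (by simpa using h))
  have hlt : x ⬝ᵥ (A *ᵥ x) < t * (x ⬝ᵥ x) := by
    rw [quad_eq_sum_eig hA x, dot_eq_inner, dot_self_eq_sum_repr b x, Finset.mul_sum]
    refine Finset.sum_lt_sum (fun v _ => ?_) ⟨v0, Finset.mem_univ v0, ?_⟩
    · by_cases hv : v ∈ s
      · have h0 : b.repr x v = 0 := hxs v (by simpa using hv)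
        rw [h0]; simp
      · have hvlt : hA.eigenvalues v < t := by
          have := Finset.mem_filter.not.mp hv
          push_neg at this
          exact this (Finset.mem_univ v)
        nlinarith [sq_nonneg (b.repr x v)]
    · have hvlt : hA.eigenvalues v0 < t := by
        have := Finset.mem_filter.not.mp hv0s
        push_neg at this
        exact this (Finset.mem_univ v0)
      have h2 : 0 < (b.repr x v0)^2 := by positivity
      nlinarith
  exact absurd (hq x hxW) (not_le.mpr hlt)

end SpectralCounting

section GraphPart
set_option linter.unusedSectionVars false
variable {m : ℕ} (n : Fin (m+1) → ℕ)

lemma sigma_sum_eq (f : ((i : Fin (m+1)) × Fin (n i)) → ℝ) :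
    ∑ v, f v = ∑ p, ∑ j, f ⟨p, j⟩ := by
  rw [← Finset.univ_sigma_univ, Finset.sum_sigma]

open scoped Classical in
lemma seidel_mulVec (x : ((i : Fin (m+1)) × Fin (n i)) → ℝ) (u : (i : Fin (m+1)) × Fin (n i)) :
    (seidelMatrix (completeMultipartiteGraph fun i => Fin (n i)) *ᵥ x) u
      = 2 * (∑ j, x ⟨u.1, j⟩) - x u - ∑ v, x v := by
  have hentry : ∀ v, seidelMatrix (completeMultipartiteGraph fun i => Fin (n i)) u v
      = 1 - (if u = v then (1:ℝ) else 0) - 2 * (if u.1 ≠ v.1 then (1:ℝ) else 0) := by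
    intro v
    rw [seidelMatrix, Matrix.sub_apply, Matrix.sub_apply, Matrix.smul_apply, Matrix.of_apply,
      Matrix.one_apply, adjMatrix_apply]
    simp only [comap_adj, top_adj, nsmul_eq_mul, Nat.cast_ofNat]
  rw [mulVec, dotProduct]
  have : ∀ v, seidelMatrix (completeMultipartiteGraph fun i => Fin (n i)) u v * x v
      = x v - (if u = v then x v else 0) - 2 * (if u.1 = v.1 then (0:ℝ) else x v) := by
    intro v
    rw [hentry v]
    by_cases h1 : u = v
    · simp [h1]
    · by_cases h2 : u.1 = v.1 <;> simp [h1, h2] <;> ring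
  rw [Finset.sum_congr rfl fun v _ => this v]
  rw [Finset.sum_sub_distrib, Finset.sum_sub_distrib]
  have e1 : ∑ v, (if u = v then x v else 0) = x u := by
    rw [Finset.sum_ite_eq]; simp
  have e2 : ∑ v : (i : Fin (m+1)) × Fin (n i), (if u.1 = v.1 then (0:ℝ) else x v)
      = (∑ v, x v) - ∑ j, x ⟨u.1, j⟩ := by
    have : ∀ v : (i : Fin (m+1)) × Fin (n i),
        (if u.1 = v.1 then (0:ℝ) else x v) = x v - (if u.1 = v.1 then x v else 0) := by
      intro v; by_cases h : u.1 = v.1 <;> simp [h]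
    rw [Finset.sum_congr rfl fun v _ => this v, Finset.sum_sub_distrib]
    congr 1
    rw [sigma_sum_eq n (fun v => if u.1 = v.1 then x v else 0)]
    have : ∀ p, ∑ j : Fin (n p), (if u.1 = p then x ⟨p, j⟩ else 0)
        = if u.1 = p then ∑ j : Fin (n p), x ⟨p, j⟩ else 0 := by
      intro p; by_cases h : u.1 = p <;> simp [h]
    rw [Finset.sum_congr rfl fun p _ => this p, Finset.sum_ite_eq]
    simp
  rw [← Finset.mul_sum, e1, e2]
  ring

open scoped Classical in
lemma seidel_quad (x : ((i : Fin (m+1)) × Fin (n i)) → ℝ) :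
    x ⬝ᵥ (seidelMatrix (completeMultipartiteGraph fun i => Fin (n i)) *ᵥ x)
      = 2 * (∑ p, (∑ j, x ⟨p, j⟩)^2) - (∑ v, (x v)^2) - (∑ v, x v)^2 := by
  rw [dotProduct]
  have : ∀ u, x u * (seidelMatrix (completeMultipartiteGraph fun i => Fin (n i)) *ᵥ x) u
      = 2 * (x u * ∑ j, x ⟨u.1, j⟩) - (x u)^2 - x u * ∑ v, x v := by
    intro u; rw [seidel_mulVec]; ring
  rw [Finset.sum_congr rfl fun u _ => this u, Finset.sum_sub_distrib, Finset.sum_sub_distrib,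
    ← Finset.mul_sum, ← Finset.sum_mul]
  have e3 : ∑ u : (i : Fin (m+1)) × Fin (n i), x u * ∑ j, x ⟨u.1, j⟩
      = ∑ p, (∑ j, x ⟨p, j⟩)^2 := by
    rw [sigma_sum_eq n (fun u => x u * ∑ j, x ⟨u.1, j⟩)]
    refine Finset.sum_congr rfl fun p _ => ?_
    show ∑ j : Fin (n p), x ⟨p, j⟩ * ∑ j', x ⟨p, j'⟩ = _
    rw [← Finset.sum_mul, sq]
  rw [e3]
  ring

open scoped Classical in
lemma upper_subspace (hna : Antitone n) (i : Fin m) :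
    ∃ W : Submodule ℝ (EuclideanSpace ℝ ((p : Fin (m+1)) × Fin (n p))),
      Fintype.card ((p : Fin (m+1)) × Fin (n p)) ≤ Module.finrank ℝ W + i.val ∧
      ∀ x ∈ W, x ⬝ᵥ (seidelMatrix (completeMultipartiteGraph fun i => Fin (n i)) *ᵥ x)
        ≤ (2*(n i.castSucc : ℝ) - 1) * (x ⬝ᵥ x) := by
  have him : (i.val : ℕ) < m + 1 := by omega
  let emb : Fin i.val → Fin (m+1) := fun j => ⟨j.val, by omega⟩
  let Φ : EuclideanSpace ℝ ((p : Fin (m+1)) × Fin (n p)) →ₗ[ℝ] (Fin i.val → ℝ) :=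
    { toFun := fun x j => ∑ jj, x ⟨emb j, jj⟩
      map_add' := by intro x y; funext j; simp [Finset.sum_add_distrib]
      map_smul' := by intro c x; funext j; simp [Finset.mul_sum] }
  refine ⟨LinearMap.ker Φ, ?_, ?_⟩
  · have h1 := LinearMap.finrank_range_add_finrank_ker Φ
    rw [finrank_euclideanSpace] at h1
    have h2 : Module.finrank ℝ (LinearMap.range Φ) ≤ i.val := by
      have := Submodule.finrank_le (LinearMap.range Φ)
      rwa [Module.finrank_fintype_fun_eq_card, Fintype.card_fin] at this
    omega
  · intro x hx
    have hs0 : ∀ p : Fin (m+1), p.val < i.val → ∑ jj, x ⟨p, jj⟩ = 0 := by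
      intro p hp
      have := congrFun (LinearMap.mem_ker.mp hx) ⟨p.val, hp⟩
      simpa [Φ, emb, Fin.ext_iff] using this
    rw [seidel_quad n x]
    have hxx : x ⬝ᵥ x = ∑ v, (x v)^2 := by
      rw [dotProduct]; exact Finset.sum_congr rfl fun v _ => (sq (x v)).symm
    have hA : ∑ p, (∑ j, x ⟨p, j⟩)^2 ≤ (n i.castSucc : ℝ) * ∑ v, (x v)^2 := by
      rw [sigma_sum_eq n (fun v => (x v)^2), Finset.mul_sum]
      refine Finset.sum_le_sum fun p _ => ?_
      by_cases hp : p.val < i.val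
      · rw [hs0 p hp]
        have hz : (0:ℝ) ≤ (n i.castSucc : ℝ) * ∑ j, (x ⟨p, j⟩)^2 := by positivity
        simpa using hz
      · have hcard : ((Finset.univ : Finset (Fin (n p))).card : ℝ) = (n p : ℝ) := by simp
        have hCS : (∑ j, x ⟨p, j⟩)^2 ≤ (n p : ℝ) * ∑ j, (x ⟨p, j⟩)^2 := by
          have := sq_sum_le_card_mul_sum_sq (s := (Finset.univ : Finset (Fin (n p))))
            (f := fun j => x ⟨p, j⟩)
          rwa [hcard] at this
        refine hCS.trans ?_
        have hle : (n p : ℝ) ≤ (n i.castSucc : ℝ) := by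
          have : i.castSucc ≤ p := by
            rw [Fin.le_def]; simpa using Nat.le_of_not_lt hp
          exact_mod_cast Nat.cast_le.mpr (hna this)
        apply mul_le_mul_of_nonneg_right hle
        positivity
    have hT : (0:ℝ) ≤ (∑ v, x v)^2 := sq_nonneg _
    have hB : (0:ℝ) ≤ ∑ v, (x v)^2 := Finset.sum_nonneg fun v _ => sq_nonneg _
    rw [hxx]
    nlinarith [hA, hT, hB]

open scoped Classical in
lemma lower_subspace (hna : Antitone n) (hn : ∀ p, 1 ≤ n p) (i : Fin m) :
    ∃ W : Submodule ℝ (EuclideanSpace ℝ ((p : Fin (m+1)) × Fin (n p))),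
      i.val + 1 ≤ Module.finrank ℝ W ∧
      ∀ x ∈ W, (2*(n i.succ : ℝ) - 1) * (x ⬝ᵥ x)
        ≤ x ⬝ᵥ (seidelMatrix (completeMultipartiteGraph fun i => Fin (n i)) *ᵥ x) := by
  set s : Fin (m+1) := i.succ with hs
  have hsval : s.val = i.val + 1 := rfl
  let emb : Fin (i.val+1) → Fin (m+1) := fun j => ⟨j.val, by omega⟩
  have hembs : ∀ l, emb l ≠ s := by
    intro l h
    have := congrArg Fin.val h
    simp only [emb, hsval] at this
    omega
  have hnz : ∀ p : Fin (m+1), ((n p : ℝ)) ≠ 0 := by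
    intro p
    have := hn p
    positivity
  let wp : Fin (i.val+1) → Fin (m+1) → ℝ :=
    fun l p => if p = emb l then ((n p : ℝ))⁻¹ else if p = s then -((n s : ℝ))⁻¹ else 0
  let w : Fin (i.val+1) → EuclideanSpace ℝ ((p : Fin (m+1)) × Fin (n p)) :=
    fun l => WithLp.toLp 2 (fun u : (p : Fin (m+1)) × Fin (n p) => wp l u.1)
  have happly : ∀ (a : Fin (i.val+1) → ℝ) (u : (p : Fin (m+1)) × Fin (n p)),
      (∑ l, a l • w l) u = ∑ l, a l * wp l u.1 := by
    intro a u
    rw [WithLp.ofLp_sum]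
    exact Finset.sum_apply u Finset.univ (fun l => fun v : (p : Fin (m+1)) × Fin (n p) => a l * wp l v.1)
  have hli : LinearIndependent ℝ w := by
    rw [Fintype.linearIndependent_iff]
    intro g hg l
    have h1 : (∑ l', g l' • w l') ⟨emb l, ⟨0, hn (emb l)⟩⟩ = 0 := by rw [hg]; rfl
    rw [happly] at h1
    have h2 : ∀ l', g l' * wp l' (emb l) = if l' = l then g l * ((n (emb l) : ℝ))⁻¹ else 0 := by
      intro l'
      by_cases h : l' = l
      · subst h; simp [wp]
      · have : emb l ≠ emb l' := by
          intro he
          exact h (Fin.ext (by simpa [emb, Fin.ext_iff] using he.symm))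
        simp [wp, this, hembs l, h]
    rw [Finset.sum_congr rfl fun l' _ => h2 l', Finset.sum_ite_eq' _ l] at h1
    simp only [Finset.mem_univ, if_true] at h1
    rcases mul_eq_zero.mp h1 with h | h
    · exact h
    · exact absurd h (inv_ne_zero (hnz _))
  refine ⟨Submodule.span ℝ (Set.range w), ?_, ?_⟩
  · rw [finrank_span_eq_card hli, Fintype.card_fin]
  · intro x hx
    obtain ⟨a, ha⟩ := (Submodule.mem_span_range_iff_exists_fun ℝ).mp hx
    set c : Fin (m+1) → ℝ := fun p => ∑ l, a l * wp l p with hc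
    have hxc : ∀ u : (p : Fin (m+1)) × Fin (n p), x u = c u.1 := by
      intro u
      rw [← ha, happly]
    -- part sums
    have hsp : ∀ p, ∑ j : Fin (n p), x ⟨p, j⟩ = (n p : ℝ) * c p := by
      intro p
      rw [Finset.sum_congr rfl fun j _ => hxc ⟨p, j⟩]
      simp [mul_comm]
    have hwp0 : ∀ l, ∑ p, (n p : ℝ) * wp l p = 0 := by
      intro l
      have hsplit : ∀ p, (n p : ℝ) * wp l p
          = (if p = emb l then (1:ℝ) else 0) + (if p = s then (-1:ℝ) else 0) := by
        intro p
        by_cases h1 : p = emb l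
        · subst h1
          simp [wp, hembs l, mul_inv_cancel₀ (hnz _)]
        · by_cases h2 : p = s
          · subst h2
            simp [wp, h1, mul_inv_cancel₀ (hnz _)]
          · simp [wp, h1, h2]
      rw [Finset.sum_congr rfl fun p _ => hsplit p, Finset.sum_add_distrib,
        Finset.sum_ite_eq' _ (emb l), Finset.sum_ite_eq' _ s]
      simp
    have hT : ∑ v, x v = 0 := by
      rw [sigma_sum_eq n x]
      rw [Finset.sum_congr rfl fun p _ => (hsp p)]
      have : ∑ p, (n p : ℝ) * c p = ∑ l, a l * ∑ p, (n p : ℝ) * wp l p := by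
        rw [hc]
        simp_rw [Finset.mul_sum]
        rw [Finset.sum_comm]
        refine Finset.sum_congr rfl fun l _ => ?_
        refine Finset.sum_congr rfl fun p _ => ?_
        ring
      rw [this]
      simp [hwp0]
    have hc0 : ∀ p, s < p → c p = 0 := by
      intro p hp
      rw [hc]
      refine Finset.sum_eq_zero fun l _ => ?_
      have h1 : p ≠ emb l := by
        intro h
        have := congrArg Fin.val h
        simp only [emb] at this
        have : p.val ≤ i.val := by omega
        have h2 := Fin.lt_def.mp hp
        omega
      have h2 : p ≠ s := by
        intro h
        subst h
        exact lt_irrefl _ hp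
      simp [wp, h1, h2]
    -- now compute
    have hxx : x ⬝ᵥ x = ∑ p, (n p : ℝ) * (c p)^2 := by
      rw [dotProduct]
      rw [show ∑ v, x v * x v = ∑ v, (x v)^2 from Finset.sum_congr rfl fun v _ => (sq (x v)).symm]
      rw [sigma_sum_eq n (fun v => (x v)^2)]
      refine Finset.sum_congr rfl fun p _ => ?_
      rw [Finset.sum_congr rfl fun j _ => by rw [hxc ⟨p, j⟩]]
      simp [mul_comm]
    have hq : x ⬝ᵥ (seidelMatrix (completeMultipartiteGraph fun i => Fin (n i)) *ᵥ x)
        = ∑ p, (2 * (n p:ℝ) - 1) * ((n p : ℝ) * (c p)^2) := by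
      rw [seidel_quad n x, hT]
      rw [Finset.sum_congr rfl fun p _ => congrArg (·^2) (hsp p)]
      rw [show ∑ v, (x v)^2 = ∑ p, (n p:ℝ) * (c p)^2 by
        rw [sigma_sum_eq n (fun v => (x v)^2)]
        refine Finset.sum_congr rfl fun p _ => ?_
        rw [Finset.sum_congr rfl fun j _ => by rw [hxc ⟨p, j⟩]]
        simp [mul_comm]]
      rw [Finset.mul_sum, ← Finset.sum_sub_distrib]
      simp only [ne_eq, OfNat.ofNat_ne_zero, not_false_eq_true, zero_pow, sub_zero]
      refine Finset.sum_congr rfl fun p _ => ?_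
      ring
    rw [hxx, hq, Finset.mul_sum]
    refine Finset.sum_le_sum fun p _ => ?_
    by_cases hcp : c p = 0
    · simp [hcp]
    · have hps : p ≤ s := by
        by_contra h
        exact hcp (hc0 p (lt_of_not_ge h))
      have hnsp : (n s : ℝ) ≤ (n p : ℝ) := by exact_mod_cast hna hps
      have h1 : (0:ℝ) ≤ (n p : ℝ) * (c p)^2 := by positivity
      nlinarith

end GraphPart

open scoped Classical in
/-- **Lemma (interlacing of the positive Seidel eigenvalues).**
Let `n_1 ≥ ⋯ ≥ n_k ≥ 1` (with `k = m + 1` parts) and let `lam 0 ≥ ⋯ ≥ lam (m-1)`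
be the positive Seidel eigenvalues (with multiplicity) of `K_{n_1,…,n_k}`.
Then `2 n_{i+1} - 1 ≤ lam i ≤ 2 n_i - 1` for every `i`. -/
theorem positive_seidel_eigenvalues_bounds (m : ℕ) (n : Fin (m + 1) → ℕ)
    (hna : Antitone n) (hn : ∀ i, 1 ≤ n i)
    (hS : (seidelMatrix (completeMultipartiteGraph fun i => Fin (n i))).IsHermitian)
    (lam : Fin m → ℝ) (hlam : Antitone lam) (hpos : ∀ i, 0 < lam i)
    (henum : Multiset.filter (fun x => 0 < x)
        (Finset.univ.val.map hS.eigenvalues) = Finset.univ.val.map lam) :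
    ∀ i : Fin m, 2 * (n i.succ : ℝ) - 1 ≤ lam i ∧ lam i ≤ 2 * (n i.castSucc : ℝ) - 1 := by
  intro i
  have hcount : ∀ (p : ℝ → Prop), (∀ x, p x → 0 < x) →
      (Finset.univ.filter fun v => p (hS.eigenvalues v)).card
        = (Finset.univ.filter fun j => p (lam j)).card := by
    intro p hp
    have h1 := congrArg (Multiset.countP p) henum
    rw [Multiset.countP_filter] at h1
    have hpe : (fun a => p a ∧ 0 < a) = p :=
      funext fun a => propext ⟨fun h => h.1, fun h => ⟨h, hp a h⟩⟩
    simp only [hpe] at h1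
    rw [Multiset.countP_map, Multiset.countP_map] at h1
    simpa [Finset.card, Finset.filter_val] using h1
  constructor
  · -- lower bound
    obtain ⟨W, hWd, hWq⟩ := lower_subspace n hna hn i
    have h2 := count_ge_of_subspace hS W hWd hWq
    rw [hcount (fun x => 2 * (n i.succ : ℝ) - 1 ≤ x)
      (fun x hx => by
        have h1n : (1:ℝ) ≤ (n i.succ : ℝ) := by exact_mod_cast hn i.succ
        linarith)] at h2
    by_contra hcon
    push_neg at hcon
    have hsub : (Finset.univ.filter fun j => 2 * (n i.succ : ℝ) - 1 ≤ lam j)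
        ⊆ Finset.Iio i := by
      intro j hj
      rw [Finset.mem_filter] at hj
      rw [Finset.mem_Iio]
      by_contra hij
      push_neg at hij
      have := hlam hij
      linarith [hj.2]
    have := Finset.card_le_card hsub
    rw [Fin.card_Iio] at this
    omega
  · -- upper bound
    obtain ⟨W, hWd, hWq⟩ := upper_subspace n hna i
    have h2 := count_le_of_subspace hS W hWd hWq
    rw [hcount (fun x => 2 * (n i.castSucc : ℝ) - 1 < x)
      (fun x hx => by
        have h1n : (1:ℝ) ≤ (n i.castSucc : ℝ) := by exact_mod_cast hn i.castSucc
        linarith)] at h2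
    by_contra hcon
    push_neg at hcon
    have hsub : Finset.Iic i ⊆
        (Finset.univ.filter fun j => 2 * (n i.castSucc : ℝ) - 1 < lam j) := by
      intro j hj
      rw [Finset.mem_Iic] at hj
      rw [Finset.mem_filter]
      exact ⟨Finset.mem_univ j, lt_of_lt_of_le hcon (hlam hj)⟩
    have := Finset.card_le_card hsub
    rw [Fin.card_Iic] at this
    omega
end

section
/- Let n_1,…,n_k be real numbers (k ≥ 1) and let B be the k×k matrix with diagonal entries B_{ii} = n_i − 1 and off-diagonal entries B_{ij} = −n_j for i ≠ j (the quotient matrix of the Seidel matrix of K_{n_1,…,n_k} with respect to the partition into parts). Then det(λI − B) = ∏_{i=1}^{k} (λ + 1 − 2n_i) + ∑_{i=1}^{k} n_i ∏_{j≠i} (λ + 1 − 2n_j). -/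
open Polynomial Matrix Finset

lemma det_diag_add_outer {K : Type*} [Field K] {k : ℕ} (d c : Fin k → K)
    (hd : ∀ i, d i ≠ 0) :
    (Matrix.of fun i j : Fin k => (if i = j then d i else 0) + c j).det
      = ∏ i, d i + ∑ i, c i * ∏ j ∈ Finset.univ.erase i, d j := by
  have hM : (Matrix.of fun i j : Fin k => (if i = j then d i else 0) + c j)
      = Matrix.diagonal d + Matrix.replicateCol Unit (fun _ => (1:K)) * Matrix.replicateRow Unit c := by
    ext i j
    simp [Matrix.mul_apply, Matrix.diagonal_apply]
  have hdet : IsUnit (Matrix.diagonal d).det := by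
    rw [Matrix.det_diagonal, isUnit_iff_ne_zero]
    exact Finset.prod_ne_zero_iff.2 fun i _ => hd i
  have hinv : (Matrix.diagonal d)⁻¹ = Matrix.diagonal (fun i => (d i)⁻¹) := by
    apply Matrix.inv_eq_right_inv
    rw [Matrix.diagonal_mul_diagonal,
      show (fun i => d i * (d i)⁻¹) = fun _ => (1 : K) from
        funext fun i => mul_inv_cancel₀ (hd i), Matrix.diagonal_one]
  rw [hM, Matrix.det_add_replicateCol_mul_replicateRow hdet, Matrix.det_diagonal,
    hinv, Matrix.det_unique]
  have : ((1 + Matrix.replicateRow Unit c * Matrix.diagonal (fun i => (d i)⁻¹) *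
      Matrix.replicateCol Unit (fun _ => (1 : K))) : Matrix Unit Unit K) default default
      = 1 + ∑ j, c j * (d j)⁻¹ := by
    simp only [Matrix.add_apply, Matrix.one_apply_eq]
    erw [Matrix.mul_apply]
    simp [Matrix.mul_apply, Matrix.diagonal_apply, Ring.inverse_eq_inv',
      Finset.mul_sum, mul_comm]
  erw [this]
  rw [mul_add, mul_one, Finset.mul_sum]
  congr 1
  refine Finset.sum_congr rfl fun j _ => ?_
  rw [← Finset.mul_prod_erase Finset.univ d (Finset.mem_univ j)]
  field_simp [hd j]

/-- The quotient matrix `B` of the Seidel matrix of `K_{n_1,…,n_k}` with respect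
to the partition into its parts: `B i i = n i - 1` and `B i j = -(n j)` for
`i ≠ j`. Its characteristic polynomial is
`∏_i (λ + 1 - 2 n_i) + ∑_i n_i ∏_{j ≠ i} (λ + 1 - 2 n_j)`. -/
theorem charpoly_quotient_matrix (k : ℕ) (hk : 1 ≤ k) (n : Fin k → ℝ) :
    (Matrix.of fun i j : Fin k => if i = j then n i - 1 else -(n j)).charpoly =
      (∏ i, (X + 1 - C (2 * n i))) +
        ∑ i, C (n i) * ∏ j ∈ Finset.univ.erase i, (X + 1 - C (2 * n j)) := by
  set φ := algebraMap ℝ[X] (RatFunc ℝ)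
  have hinj : Function.Injective φ := RatFunc.algebraMap_injective ℝ
  apply hinj
  set d : Fin k → RatFunc ℝ := fun i => φ (X + 1 - C (2 * n i)) with hdd
  have hne : ∀ i, (X + 1 - C (2 * n i) : ℝ[X]) ≠ 0 := by
    intro i
    have h1 : (X + 1 - C (2 * n i) : ℝ[X]) = X + C (1 - 2 * n i) := by
      rw [C_sub, C_1]; ring
    rw [h1]
    exact X_add_C_ne_zero _
  have hd : ∀ i, d i ≠ 0 := fun i => by
    rw [hdd]; exact (map_ne_zero_iff φ hinj).2 (hne i)
  have key := det_diag_add_outer d (fun j => φ (C (n j))) hd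
  have hmap : ((Matrix.of fun i j : Fin k => if i = j then n i - 1 else -(n j)).charmatrix).map φ
      = Matrix.of fun i j : Fin k => (if i = j then d i else 0) + φ (C (n j)) := by
    ext i j
    by_cases h : i = j
    · subst h
      have h2 : ((X : ℝ[X]) - C (n i - 1)) = (X + 1 - C (2 * n i)) + C (n i) := by
        rw [C_sub, C_mul, C_1, map_ofNat]; ring
      simp only [Matrix.map_apply, Matrix.charmatrix_apply_eq, Matrix.of_apply,
        eq_self_iff_true, if_true, hdd]
      rw [h2, map_add]
    · simp [Matrix.charmatrix_apply, h, hdd]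
  rw [Matrix.charpoly, RingHom.map_det, RingHom.mapMatrix_apply, hmap, key, map_add, map_prod, map_sum]
  congr 1
  refine Finset.sum_congr rfl fun i _ => ?_
  simp only [hdd, ← map_prod, ← _root_.map_mul]
end
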